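/- arXiv:2411.12867 — 7 statements merged into one kernel-verified Lean document; each statement's English description precedes it below -/
import Mathlib

section
/- Let F be a field of characteristic p > 0 and let K be a profinite group such that p^∞ divides the pro-order of K. Then the only projective object of Mod_F(K) is the zero module. -/
/-- An action of a topological group `G` on `V` is *smooth* if every vector has an open
stabilizer. -/
def SmoothAction (G V : Type) [Group G] [TopologicalSpace G] [MulAction G V] : Prop :=
  ∀ v : V, IsOpen ((MulAction.stabilizer G v : Subgroup G) : Set G)

/-- `P` is a projective object of the category `Mod_F(G)` of smooth `F[G]`-modules:
for every surjective (`G`-equivariant, `F`-linear) morphism `f : V → W` of smooth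
`F[G]`-modules and every morphism `q : P → W` there exists a morphism `h : P → V` with
`f ∘ h = q`. -/
def IsProjectiveSmooth (F G : Type) [Field F] [Group G] [TopologicalSpace G]
    (P : Type) [AddCommGroup P] [Module F P] [DistribMulAction G P] [SMulCommClass G F P] :
    Prop :=
  ∀ (V W : Type)
    [AddCommGroup V] [Module F V] [DistribMulAction G V] [SMulCommClass G F V]
    [AddCommGroup W] [Module F W] [DistribMulAction G W] [SMulCommClass G F W],
    SmoothAction G V → SmoothAction G W →
    ∀ f : V →ₗ[F] W, (∀ (g : G) (v : V), f (g • v) = g • f v) → Function.Surjective f →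
    ∀ q : P →ₗ[F] W, (∀ (g : G) (x : P), q (g • x) = g • q x) →
    ∃ h : P →ₗ[F] V, (∀ (g : G) (x : P), h (g • x) = g • h x) ∧ ∀ x : P, f (h x) = q x

section Aux

variable (F K P : Type) [Field F] [Group K] [AddCommGroup P] [Module F P]
  [DistribMulAction K P] [SMulCommClass K F P]

/-- The submodule of vectors fixed pointwise by a subgroup `N`. -/
def fixedSub (N : Subgroup K) : Submodule F P where
  carrier := {x | ∀ n ∈ N, n • x = x}
  add_mem' := by
    intro a b ha hb n hn
    rw [smul_add, ha n hn, hb n hn]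
  zero_mem' := by
    intro n _
    exact smul_zero n
  smul_mem' := by
    intro c x hx n hn
    rw [smul_comm, hx n hn]

variable {K}

instance fixedSub.instDistribMulAction (N : Subgroup K) [hN : N.Normal] :
    DistribMulAction K ↥(fixedSub F K P N) where
  smul g x := ⟨g • (x : P), by
    intro n hn
    have h1 : (g⁻¹ * n * g) • (x : P) = x := x.2 _ (by simpa using hN.conj_mem n hn g⁻¹)
    calc n • g • (x : P) = (n * g) • (x : P) := (mul_smul _ _ _).symm
    _ = (g * (g⁻¹ * n * g)) • (x : P) := by group
    _ = g • ((g⁻¹ * n * g) • (x : P)) := mul_smul _ _ _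
    _ = g • (x : P) := by rw [h1]⟩
  one_smul x := Subtype.ext (one_smul K (x : P))
  mul_smul g h x := Subtype.ext (mul_smul g h (x : P))
  smul_zero g := Subtype.ext (smul_zero g)
  smul_add g x y := Subtype.ext (smul_add g (x : P) (y : P))

@[simp] lemma fixedSub.coe_smul (N : Subgroup K) [N.Normal] (g : K)
    (x : ↥(fixedSub F K P N)) : ((g • x : ↥(fixedSub F K P N)) : P) = g • (x : P) := rfl

instance fixedSub.instSMulCommClass (N : Subgroup K) [N.Normal] :
    SMulCommClass K F ↥(fixedSub F K P N) :=
  ⟨fun g c x => Subtype.ext (by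
    show g • ((c • x : ↥(fixedSub F K P N)) : P) = ((c • (g • x) : ↥(fixedSub F K P N)) : P)
    simp only [SetLike.val_smul, fixedSub.coe_smul]
    exact smul_comm g c (x : P))⟩

end Aux

/-- Twisted function space: functions from a `K`-set `X` to a `K`-module `W`. -/
def TwFun (X W : Type) : Type := X → W

namespace TwFun

variable {F K X W : Type} [Field F] [Group K]

instance [AddCommGroup W] : AddCommGroup (TwFun X W) := Pi.addCommGroup

instance [AddCommGroup W] [Module F W] : Module F (TwFun X W) := Pi.module _ _ _

instance [MulAction K X] [AddCommGroup W] [DistribMulAction K W] :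
    DistribMulAction K (TwFun X W) where
  smul g ξ := fun x => g • (ξ (g⁻¹ • x))
  one_smul ξ := funext fun x => by
    show (1 : K) • ξ ((1 : K)⁻¹ • x) = ξ x
    simp
  mul_smul g h ξ := funext fun x => by
    show (g * h) • ξ ((g * h)⁻¹ • x) = g • (h • ξ (h⁻¹ • g⁻¹ • x))
    rw [mul_inv_rev, mul_smul, mul_smul]
  smul_zero g := funext fun x => smul_zero g
  smul_add g ξ η := funext fun x => smul_add g _ _

@[simp] lemma smul_apply [MulAction K X] [AddCommGroup W] [DistribMulAction K W]
    (g : K) (ξ : TwFun X W) (x : X) : (g • ξ) x = g • ξ (g⁻¹ • x) := rfl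

lemma pi_smul_apply [AddCommGroup W] [Module F W] (c : F) (ξ : TwFun X W) (x : X) :
    (c • ξ) x = c • ξ x := rfl

instance [MulAction K X] [AddCommGroup W] [Module F W] [DistribMulAction K W]
    [SMulCommClass K F W] : SMulCommClass K F (TwFun X W) :=
  ⟨fun g c ξ => funext fun x => by
    show g • ((c • ξ) (g⁻¹ • x)) = c • (g • ξ (g⁻¹ • x))
    rw [pi_smul_apply]
    exact smul_comm g c _⟩

variable (F)

/-- Summing values, as a linear map. -/
def sumEval [Fintype X] [AddCommGroup W] [Module F W] : TwFun X W →ₗ[F] W where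
  toFun ξ := ∑ x, ξ x
  map_add' ξ η := Finset.sum_add_distrib
  map_smul' c ξ := by
    simp only [RingHom.id_apply]
    show ∑ x, c • ξ x = c • ∑ x, ξ x
    exact Finset.smul_sum.symm

@[simp] lemma sumEval_apply [Fintype X] [AddCommGroup W] [Module F W] (ξ : TwFun X W) :
    sumEval F ξ = ∑ x, ξ x := rfl

lemma sumEval_equivariant [Fintype X] [MulAction K X] [AddCommGroup W] [Module F W]
    [DistribMulAction K W] (g : K) (ξ : TwFun X W) :
    sumEval F (g • ξ) = g • sumEval F ξ := by
  show (∑ x, g • ξ (g⁻¹ • x)) = g • ∑ x, ξ x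
  rw [← Finset.smul_sum]
  congr 1
  exact Equiv.sum_comp (MulAction.toPerm (g⁻¹ : K)) ξ

end TwFun

section Topo

variable {K : Type} [Group K] [TopologicalSpace K] [IsTopologicalGroup K] [CompactSpace K]

lemma exists_openNormal_le {H : Subgroup K} (hH : IsOpen (H : Set K)) :
    ∃ N : Subgroup K, N.Normal ∧ IsOpen (N : Set K) ∧ N ≤ H := by
  haveI h1 : Finite (K ⧸ H) := Subgroup.quotient_finite_of_isOpen H hH
  haveI h2 : H.FiniteIndex := Subgroup.finiteIndex_of_finite_quotient
  refine ⟨H.normalCore, H.normalCore_normal, ?_, H.normalCore_le⟩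
  exact Subgroup.isOpen_of_isClosed_of_finiteIndex _
    (H.normalCore_isClosed (H.isClosed_of_isOpen hH))

end Topo

section Key

variable (F K P : Type) [Field F] [Group K] [TopologicalSpace K] [IsTopologicalGroup K]
  [CompactSpace K] [AddCommGroup P] [Module F P] [DistribMulAction K P] [SMulCommClass K F P]

/-- Key vanishing result: any equivariant endomorphism of a projective smooth module with
values in the `N`-fixed vectors (for `N` open normal) vanishes. -/
theorem key_vanish (p : ℕ) (hp : p ≠ 0) [CharP F p]
    (hdiv : ∀ n : ℕ, ∃ N : Subgroup K, N.Normal ∧ IsOpen (N : Set K) ∧ p ^ n ∣ N.index)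
    (hPsmooth : SmoothAction K P) (hPproj : IsProjectiveSmooth F K P)
    (N : Subgroup K) (hN : N.Normal) (hNopen : IsOpen (N : Set K))
    (φ : P →ₗ[F] P) (hφ : ∀ (g : K) (x : P), φ (g • x) = g • φ x)
    (hrange : ∀ x : P, φ x ∈ fixedSub F K P N) (v : P) : φ v = 0 := by
  classical
  haveI := hN
  have hprime : p.Prime := (CharP.char_is_prime_or_zero F p).resolve_right hp
  -- an open normal subgroup fixing v
  obtain ⟨Nst, hNstNormal, hNstOpen, hNstLe⟩ := exists_openNormal_le (hPsmooth v)
  set N₀ : Subgroup K := N ⊓ Nst with hN₀def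
  have hN₀Normal : N₀.Normal := by
    constructor
    intro x hx g
    rw [Subgroup.mem_inf] at hx ⊢
    exact ⟨hN.conj_mem x hx.1 g, hNstNormal.conj_mem x hx.2 g⟩
  have hN₀Open : IsOpen (N₀ : Set K) := by
    rw [hN₀def, Subgroup.coe_inf]
    exact hNopen.inter hNstOpen
  set n : ℕ := N₀.index with hndef
  obtain ⟨M, hMNormal, hMOpen, hMdvd⟩ := hdiv n
  set N' : Subgroup K := N₀ ⊓ M with hN'def
  have hN'Normal : N'.Normal := by
    constructor
    intro x hx g
    rw [Subgroup.mem_inf] at hx ⊢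
    exact ⟨hN₀Normal.conj_mem x hx.1 g, hMNormal.conj_mem x hx.2 g⟩
  haveI := hN₀Normal
  haveI := hN'Normal
  have hN'Open : IsOpen (N' : Set K) := by
    rw [hN'def, Subgroup.coe_inf]
    exact hN₀Open.inter hMOpen
  have hN'leN₀ : N' ≤ N₀ := inf_le_left
  have hN'leN : N' ≤ N := le_trans inf_le_left inf_le_left
  have hN'leM : N' ≤ M := inf_le_right
  have hN₀leNst : N₀ ≤ Nst := inf_le_right
  have hN₀leN : N₀ ≤ N := inf_le_left
  haveI finQ' : Finite (K ⧸ N') := Subgroup.quotient_finite_of_isOpen _ hN'Open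
  haveI finQ₀ : Finite (K ⧸ N₀) := Subgroup.quotient_finite_of_isOpen _ hN₀Open
  letI : Fintype (K ⧸ N') := Fintype.ofFinite _
  letI : Fintype (K ⧸ N₀) := Fintype.ofFinite _
  set W := ↥(fixedSub F K P N) with hWdef
  set V := TwFun (K ⧸ N') W with hVdef
  -- smoothness of W
  have smoothW : SmoothAction K W := by
    intro x
    have hst : ((MulAction.stabilizer K x : Subgroup K) : Set K)
        = ((MulAction.stabilizer K (x : P) : Subgroup K) : Set K) := by
      ext g
      simp only [SetLike.mem_coe, MulAction.mem_stabilizer_iff]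
      exact ⟨fun h => congrArg Subtype.val h, fun h => Subtype.ext h⟩
    rw [hst]
    exact hPsmooth _
  -- smoothness of V
  have smoothV : SmoothAction K V := by
    intro ξ
    have hle : N' ≤ MulAction.stabilizer K ξ := by
      intro a ha
      rw [MulAction.mem_stabilizer_iff]
      funext x
      show a • ξ (a⁻¹ • x) = ξ x
      have hx : a⁻¹ • x = x := by
        obtain ⟨k, rfl⟩ := QuotientGroup.mk_surjective x
        show (a⁻¹ * k : K) = (k : K ⧸ N')
        rw [QuotientGroup.eq]
        have := hN'Normal.conj_mem a ha k⁻¹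
        simpa [mul_assoc] using this
      rw [hx]
      exact Subtype.ext ((ξ x).2 a (hN'leN ha))
    exact Subgroup.isOpen_mono hle hN'Open
  -- the test surjection
  set f : V →ₗ[F] W := TwFun.sumEval F with hfdef
  have hfequi : ∀ (g : K) (ξ : V), f (g • ξ) = g • f ξ := fun g ξ =>
    TwFun.sumEval_equivariant F g ξ
  have hfsurj : Function.Surjective f := by
    intro w
    refine ⟨fun x => if x = (1 : K ⧸ N') then w else 0, ?_⟩
    show (∑ x : K ⧸ N', if x = (1 : K ⧸ N') then w else 0) = w
    simp
  -- the map to lift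
  set q : P →ₗ[F] W := φ.codRestrict (fixedSub F K P N) hrange with hqdef
  have hqequi : ∀ (g : K) (x : P), q (g • x) = g • q x := by
    intro g x
    exact Subtype.ext (hφ g x)
  obtain ⟨h₁, hh₁, hsum⟩ := hPproj V W smoothV smoothW f hfequi hfsurj q hqequi
  -- key formula for values of h₁ v
  have key : ∀ g : K, h₁ v (g : K ⧸ N') = g • (h₁ (g⁻¹ • v) ((1 : K) : K ⧸ N')) := by
    intro g
    have h2 := hh₁ g (g⁻¹ • v)
    rw [smul_inv_smul] at h2
    have h3 : h₁ v (g : K ⧸ N') = (g • h₁ (g⁻¹ • v)) (g : K ⧸ N') := by rw [h2]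
    rw [h3]
    have h4 : (g⁻¹ • ((g : K) : K ⧸ N')) = ((1 : K) : K ⧸ N') := by
      have h5 : (g⁻¹ • ((g : K) : K ⧸ N')) = ((g⁻¹ * g : K) : K ⧸ N') := rfl
      rw [h5, inv_mul_cancel]
    show g • (h₁ (g⁻¹ • v) (g⁻¹ • ((g : K) : K ⧸ N'))) = g • (h₁ (g⁻¹ • v) ((1 : K) : K ⧸ N'))
    rw [h4]
  -- values depend only on the coset mod N₀
  have claimA : ∀ k g : K, ((k : K ⧸ N₀)) = ((g : K ⧸ N₀)) →
      h₁ v (k : K ⧸ N') = h₁ v (g : K ⧸ N') := by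
    intro k g hkg
    have hn₀ : g⁻¹ * k ∈ N₀ := QuotientGroup.eq.mp hkg.symm
    have hkgn : k = g * (g⁻¹ * k) := by group
    have hfixv : ∀ m ∈ Nst, m • (g⁻¹ • v) = g⁻¹ • v := by
      intro m hm
      have hmem : (g * m * g⁻¹) • v = v := hNstLe (by simpa using hNstNormal.conj_mem m hm g)
      calc m • g⁻¹ • v = (m * g⁻¹) • v := (mul_smul _ _ _).symm
        _ = (g⁻¹ * (g * m * g⁻¹)) • v := by group
        _ = g⁻¹ • ((g * m * g⁻¹) • v) := mul_smul _ _ _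
        _ = g⁻¹ • v := by rw [hmem]
    have hkv : k⁻¹ • v = g⁻¹ • v := by
      rw [hkgn, mul_inv_rev, mul_smul]
      exact hfixv _ (inv_mem (hN₀leNst hn₀))
    rw [key k, key g, hkv, hkgn, mul_smul]
    congr 1
    exact Subtype.ext ((h₁ (g⁻¹ • v) ((1 : K) : K ⧸ N')).2 _ (hN₀leN hn₀))
  -- the projection map between the two quotients
  have hcomap : N' ≤ N₀.comap (MonoidHom.id K) := fun x hx => hN'leN₀ hx
  set π : (K ⧸ N') →* (K ⧸ N₀) := QuotientGroup.map N' N₀ (MonoidHom.id K) hcomap with hπdef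
  have hπmk : ∀ kk : K, π (kk : K ⧸ N') = (kk : K ⧸ N₀) := by
    intro kk
    exact QuotientGroup.map_mk N' N₀ (MonoidHom.id K) hcomap kk
  have πsurj : Function.Surjective π := by
    intro y
    obtain ⟨g, rfl⟩ := QuotientGroup.mk_surjective y
    exact ⟨(g : K ⧸ N'), hπmk g⟩
  -- the value function factors through π
  set G' : K ⧸ N₀ → W := fun y => h₁ v ((y.out : K) : K ⧸ N') with hG'def
  have hfiber : ∀ x : K ⧸ N', h₁ v x = G' (π x) := by
    intro x
    obtain ⟨k, rfl⟩ := QuotientGroup.mk_surjective x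
    rw [hπmk]
    apply claimA
    show ((k : K ⧸ N₀)) = (((k : K ⧸ N₀)).out : K ⧸ N₀)
    rw [QuotientGroup.out_eq']
  -- fiber cardinalities
  set c : ℕ := (Finset.univ.filter fun x : K ⧸ N' => π x = 1).card with hcdef
  have hcard : ∀ y : K ⧸ N₀, (Finset.univ.filter fun x : K ⧸ N' => π x = y).card = c := by
    intro y
    set b : K ⧸ N' := ((y.out : K) : K ⧸ N') with hbdef
    have hπb : π b = y := by rw [hbdef, hπmk, QuotientGroup.out_eq']
    apply Finset.card_nbij' (i := fun x => b⁻¹ * x) (j := fun z => b * z)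
    · intro a ha
      simp only [Finset.mem_coe, Finset.mem_filter, Finset.mem_univ, true_and] at ha ⊢
      rw [map_mul, map_inv, hπb, ha, inv_mul_cancel]
    · intro a ha
      simp only [Finset.mem_coe, Finset.mem_filter, Finset.mem_univ, true_and] at ha ⊢
      rw [map_mul, hπb, ha, mul_one]
    · intro a _
      simp [mul_inv_cancel_left]
    · intro a _
      simp [inv_mul_cancel_left]
  have htot : Fintype.card (K ⧸ N') = Fintype.card (K ⧸ N₀) * c := by
    have h1 : (Finset.univ : Finset (K ⧸ N')).card
        = ∑ y : K ⧸ N₀, (Finset.univ.filter fun x : K ⧸ N' => π x = y).card :=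
      Finset.card_eq_sum_card_fiberwise (fun x _ => Finset.mem_univ (π x))
    rw [Finset.card_univ] at h1
    rw [h1]
    simp only [hcard]
    rw [Finset.sum_const, Finset.card_univ, smul_eq_mul]
  have hdvdcard : p ^ n ∣ Fintype.card (K ⧸ N') := by
    have h1 : M.index ∣ N'.index := Subgroup.index_dvd_of_le hN'leM
    have h2 : N'.index = Fintype.card (K ⧸ N') := by
      rw [Subgroup.index, Nat.card_eq_fintype_card]
    rw [← h2]
    exact hMdvd.trans h1
  have hcardN₀ : Fintype.card (K ⧸ N₀) = n := by
    rw [← Nat.card_eq_fintype_card]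
    rfl
  have hnlt : n < p ^ n := Nat.lt_pow_self hprime.one_lt
  have hpc : p ∣ c := by
    by_contra hc
    have hcop : Nat.Coprime (p ^ n) c :=
      Nat.Coprime.pow_left n ((Nat.Prime.coprime_iff_not_dvd hprime).mpr hc)
    have hdvd2 : p ^ n ∣ Fintype.card (K ⧸ N₀) := by
      rw [htot] at hdvdcard
      exact hcop.dvd_of_dvd_mul_right hdvdcard
    have hpos : 0 < Fintype.card (K ⧸ N₀) := Fintype.card_pos
    have hle := Nat.le_of_dvd hpos hdvd2
    rw [hcardN₀] at hle
    omega
  -- conclude: the sum vanishes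
  have hqv : q v = 0 := by
    have h1 : q v = f (h₁ v) := (hsum v).symm
    rw [h1]
    show (∑ x : K ⧸ N', h₁ v x) = 0
    calc (∑ x : K ⧸ N', h₁ v x) = ∑ x : K ⧸ N', G' (π x) :=
          Finset.sum_congr rfl fun x _ => hfiber x
      _ = ∑ y : K ⧸ N₀, ∑ x ∈ Finset.univ.filter fun x : K ⧸ N' => π x = y, G' y :=
          (Finset.sum_fiberwise' Finset.univ π G').symm
      _ = ∑ y : K ⧸ N₀, (0 : W) := by
          apply Finset.sum_congr rfl
          intro y _
          rw [Finset.sum_const, hcard y]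
          have hzero : (c : F) = 0 := (CharP.cast_eq_zero_iff F p c).mpr hpc
          rw [← Nat.cast_smul_eq_nsmul F c, hzero, zero_smul]
      _ = 0 := Finset.sum_const_zero
  have : φ v = (q v : P) := rfl
  rw [this, hqv]
  rfl

end Key

section MainAux

/-- The open normal subgroups of `K`. -/
abbrev ONS (K : Type) [Group K] [TopologicalSpace K] : Type :=
  {N : Subgroup K // N.Normal ∧ IsOpen (N : Set K)}

instance ONS.normal {K : Type} [Group K] [TopologicalSpace K] (i : ONS K) : (i.1).Normal :=
  i.2.1

variable (F K P : Type) [Field F] [Group K] [TopologicalSpace K]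
  [AddCommGroup P] [Module F P] [DistribMulAction K P] [SMulCommClass K F P]

noncomputable local instance : DecidableEq (ONS K) := Classical.decEq _

noncomputable local instance (i : ONS K) (x : ↥(fixedSub F K P i.1)) : Decidable (x ≠ 0) :=
  Classical.dec _

/-- The sum-of-inclusions map `⨁_N P^N → P`. -/
noncomputable def bigF : (Π₀ i : ONS K, ↥(fixedSub F K P i.1)) →ₗ[F] P :=
  DFinsupp.lsum ℕ (fun i => (fixedSub F K P i.1).subtype)

lemma bigF_single (i : ONS K) (x : ↥(fixedSub F K P i.1)) :
    bigF F K P (DFinsupp.single i x) = (x : P) := by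
  rw [bigF, DFinsupp.lsum_single]
  rfl

lemma big_smul_zero (g : K) :
    g • (0 : Π₀ i : ONS K, ↥(fixedSub F K P i.1)) = 0 := by
  refine DFunLike.ext _ _ fun i => ?_
  show g • ((0 : Π₀ i : ONS K, ↥(fixedSub F K P i.1)) i)
      = (0 : Π₀ i : ONS K, ↥(fixedSub F K P i.1)) i
  rw [DFinsupp.zero_apply]
  exact smul_zero g

lemma big_smul_add (g : K) (s t : Π₀ i : ONS K, ↥(fixedSub F K P i.1)) :
    g • (s + t) = g • s + g • t := by
  refine DFunLike.ext _ _ fun i => ?_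
  show g • (s i + t i) = g • (s i) + g • (t i)
  exact smul_add g _ _

lemma big_smul_single (g : K) (i : ONS K) (x : ↥(fixedSub F K P i.1)) :
    g • (DFinsupp.single i x : Π₀ i : ONS K, ↥(fixedSub F K P i.1))
      = DFinsupp.single i (g • x) := by
  refine DFunLike.ext _ _ fun j => ?_
  show g • ((DFinsupp.single i x : Π₀ i : ONS K, ↥(fixedSub F K P i.1)) j)
      = (DFinsupp.single i (g • x) : Π₀ i : ONS K, ↥(fixedSub F K P i.1)) j
  by_cases h : i = j
  · subst h
    rw [DFinsupp.single_eq_same, DFinsupp.single_eq_same]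
  · rw [DFinsupp.single_eq_of_ne (Ne.symm h), DFinsupp.single_eq_of_ne (Ne.symm h)]
    exact smul_zero g

lemma bigF_equivariant : ∀ (g : K) (s : Π₀ i : ONS K, ↥(fixedSub F K P i.1)),
    bigF F K P (g • s) = g • bigF F K P s := by
  intro g s
  induction s using DFinsupp.induction with
  | h0 =>
    rw [big_smul_zero, map_zero]
    exact (smul_zero g).symm
  | ha i x s hsupp hx ih =>
    rw [big_smul_add, map_add, map_add, smul_add, ih]
    congr 1
    rw [big_smul_single, bigF_single, bigF_single]
    rfl

variable [IsTopologicalGroup K] [CompactSpace K]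

lemma bigF_surjective (hPsmooth : SmoothAction K P) :
    Function.Surjective (bigF F K P) := by
  intro x
  obtain ⟨N, hNn, hNo, hNle⟩ := exists_openNormal_le (hPsmooth x)
  have hxmem : x ∈ fixedSub F K P N := by
    intro m hm
    exact hNle hm
  exact ⟨DFinsupp.single ⟨N, hNn, hNo⟩ ⟨x, hxmem⟩, bigF_single F K P _ _⟩

lemma bigV_smooth (hPsmooth : SmoothAction K P) :
    SmoothAction K (Π₀ i : ONS K, ↥(fixedSub F K P i.1)) := by
  intro s
  have hopen : ∀ t : Finset (ONS K),
      IsOpen ((t.inf (fun i => MulAction.stabilizer K ((s i : P))) : Subgroup K) : Set K) := by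
    intro t
    induction t using Finset.cons_induction with
    | empty =>
      rw [Finset.inf_empty]
      simp only [Subgroup.coe_top]
      exact isOpen_univ
    | cons a t ha ih =>
      rw [Finset.inf_cons, Subgroup.coe_inf]
      exact (hPsmooth _).inter ih
  have hUle : (s.support.inf (fun i => MulAction.stabilizer K ((s i : P))))
      ≤ MulAction.stabilizer K s := by
    intro a ha
    rw [MulAction.mem_stabilizer_iff]
    refine DFunLike.ext _ _ fun i => ?_
    refine Subtype.ext ?_
    show a • ((s i : P)) = ((s i : P))
    by_cases hi : i ∈ s.support
    · have hle2 : (s.support.inf (fun i => MulAction.stabilizer K ((s i : P))))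
          ≤ MulAction.stabilizer K ((s i : P)) := Finset.inf_le hi
      exact hle2 ha
    · rw [DFinsupp.notMem_support_iff.mp hi, ZeroMemClass.coe_zero]
      exact smul_zero a
  exact Subgroup.isOpen_mono hUle (hopen s.support)

end MainAux

set_option maxHeartbeats 2000000

/-- Let `F` be a field of characteristic `p > 0` and let `K` be a
profinite group such that `p^∞` divides the pro-order of `K` (i.e. for every `n` there is
an open normal subgroup `N ⊆ K` with `p ^ n ∣ [K : N]`).  Then the only projective object
of `Mod_F(K)` is the zero module. -/
theorem no_nonzero_projectives_profinite
    (F : Type) [Field F] (p : ℕ) (hp : p ≠ 0) [CharP F p]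
    (K : Type) [Group K] [TopologicalSpace K] [IsTopologicalGroup K]
    [CompactSpace K] [T2Space K] [TotallyDisconnectedSpace K]
    (hdiv : ∀ n : ℕ, ∃ N : Subgroup K, N.Normal ∧ IsOpen (N : Set K) ∧ p ^ n ∣ N.index)
    (P : Type) [AddCommGroup P] [Module F P] [DistribMulAction K P] [SMulCommClass K F P]
    (hPsmooth : SmoothAction K P) (hPproj : IsProjectiveSmooth F K P) :
    Subsingleton P := by
  have hzero : ∀ v : P, v = 0 := by
    intro v
    obtain ⟨h₂, hh₂, hsum₂⟩ := hPproj (Π₀ i : ONS K, ↥(fixedSub F K P i.1)) P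
      (bigV_smooth F K P hPsmooth) hPsmooth (bigF F K P) (bigF_equivariant F K P)
      (bigF_surjective F K P hPsmooth) LinearMap.id (fun g x => rfl)
    have hcomp : ∀ i : ONS K, h₂ v i = 0 := by
      intro i
      have hψ : ∀ (g : K) (x : P),
          ((fixedSub F K P i.1).subtype ∘ₗ (DFinsupp.lapply i) ∘ₗ h₂) (g • x)
          = g • ((fixedSub F K P i.1).subtype ∘ₗ (DFinsupp.lapply i) ∘ₗ h₂) x := by
        intro g x
        show ((h₂ (g • x)) i : P) = g • ((h₂ x i) : P)
        rw [hh₂ g x]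
        rfl
      have hψrange : ∀ x : P,
          ((fixedSub F K P i.1).subtype ∘ₗ (DFinsupp.lapply i) ∘ₗ h₂) x
            ∈ fixedSub F K P i.1 := fun x => (h₂ x i).2
      have hvan := key_vanish F K P p hp hdiv hPsmooth hPproj i.1 i.2.1 i.2.2
        ((fixedSub F K P i.1).subtype ∘ₗ (DFinsupp.lapply i) ∘ₗ h₂) hψ hψrange v
      have hco : ((h₂ v i) : P) = ((0 : ↥(fixedSub F K P i.1)) : P) := hvan
      exact Subtype.ext hco
    have hzero2 : h₂ v = 0 := DFinsupp.ext hcomp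
    calc v = bigF F K P (h₂ v) := (hsum₂ v).symm
      _ = bigF F K P 0 := by rw [hzero2]
      _ = 0 := map_zero _
  exact ⟨fun a b => by rw [hzero a, hzero b]⟩
end

section
/- Let F be a field of characteristic p > 0, let G be a locally pro-p group, and suppose G admits an infinite open pro-p subgroup K such that the pair (G,K) is fair. Then the only projective object in the category Mod_F(G) of smooth F[G]-modules is the zero module. -/
/-- A topological group is *pro-`p`* if it is profinite and all of its finite continuous
quotients are `p`-groups; equivalently, every open normal subgroup has index a power
of `p`. -/
def IsProPGroup (p : ℕ) (K : Type) [Group K] [TopologicalSpace K] : Prop :=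
  ∀ N : Subgroup K, N.Normal → IsOpen (N : Set K) → ∃ n : ℕ, N.index = p ^ n

/-- A pair `(G, K)` consisting of a topological group `G` and a (profinite open) subgroup
`K ⊆ G` is *fair* if for every open subgroup `H ⊆ K` there exists an open subgroup `H' ⊆ K`
such that `K ∩ gH'g⁻¹ ⊊ K ∩ gHg⁻¹` (strict inclusion) for all `g ∈ G`. -/
def IsFair (G : Type) [Group G] [TopologicalSpace G] (K : Subgroup G) : Prop :=
  ∀ H : Subgroup G, H ≤ K → IsOpen (H : Set G) →
    ∃ H' : Subgroup G, H' ≤ K ∧ IsOpen (H' : Set G) ∧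
      ∀ g : G,
        K ⊓ Subgroup.map (MulAut.conj g).toMonoidHom H' <
          K ⊓ Subgroup.map (MulAut.conj g).toMonoidHom H


open MulAction

/-- Counting lemma: a finite set closed under a group action on which a function is
orbit-constant, with all stabilizer indices finite and divisible by `p`, has function-sum zero
in characteristic `p`. -/
lemma sum_eq_zero_of_pdvd {F : Type} [Field F] {p : ℕ} [CharP F p]
    {Γ X : Type} [Group Γ] [MulAction Γ X] (T : Finset X) (u : X → F)
    (hclosed : ∀ (γ : Γ), ∀ x ∈ T, γ • x ∈ T)
    (hconst : ∀ (γ : Γ), ∀ x ∈ T, u (γ • x) = u x)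
    (hstab : ∀ x ∈ T, (stabilizer Γ x).index ≠ 0 ∧ p ∣ (stabilizer Γ x).index) :
    ∑ x ∈ T, u x = 0 := by
  classical
  apply Finset.sum_cancels_of_partition_cancels (orbitRel Γ X)
  intro x hx
  obtain ⟨hind, hdvd⟩ := hstab x hx
  have hq : Finite (Γ ⧸ stabilizer Γ x) := by
    have := Nat.card_ne_zero.mp hind
    exact this.2
  have horb : Finite (orbit Γ x) := Finite.of_equiv _ (orbitEquivQuotientStabilizer Γ x).symm
  have hfin : (orbit Γ x).Finite := Set.toFinite _
  have hfilter : (T.filter fun a => (orbitRel Γ X).r a x) = hfin.toFinset := by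
    ext a
    simp only [Finset.mem_filter, Set.Finite.mem_toFinset]
    constructor
    · rintro ⟨-, h⟩; exact h
    · rintro ⟨γ, rfl⟩
      exact ⟨hclosed γ x hx, ⟨γ, rfl⟩⟩
  have hcard : hfin.toFinset.card = (stabilizer Γ x).index := by
    rw [← Set.ncard_eq_toFinset_card _ hfin, ← Nat.card_coe_set_eq]
    exact Nat.card_congr (orbitEquivQuotientStabilizer Γ x)
  have hval : ∀ a ∈ hfin.toFinset, u a = u x := by
    intro a ha
    rw [Set.Finite.mem_toFinset] at ha
    obtain ⟨γ, rfl⟩ := ha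
    exact hconst γ x hx
  calc (∑ a ∈ T with (orbitRel Γ X).r a x, u a) = ∑ a ∈ hfin.toFinset, u a := by rw [hfilter]
    _ = ∑ _a ∈ hfin.toFinset, u x := Finset.sum_congr rfl hval
    _ = (hfin.toFinset.card : F) * u x := by rw [Finset.sum_const, nsmul_eq_mul]
    _ = 0 := by
        rw [hcard, (CharP.cast_eq_zero_iff F p _).mpr hdvd, zero_mul]


open MulAction

section Index

variable {G : Type} [Group G] [TopologicalSpace G] [IsTopologicalGroup G]
variable {K : Subgroup G} [CompactSpace K]

/-- The relative index of open subgroups `B ≤ A ≤ K` of a pro-`p` group `K` is a power of `p`. -/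
lemma relIndex_isPPow {p : ℕ} (hp : p.Prime) (hKproP : IsProPGroup p ↥K)
    {A B : Subgroup G} (hBA : B ≤ A) (hA : A ≤ K) (hAopen : IsOpen (A : Set G))
    (hBopen : IsOpen (B : Set G)) : ∃ m : ℕ, B.relIndex A = p ^ m := by
  have hB : B ≤ K := hBA.trans hA
  set A₁ := A.subgroupOf K with hA₁
  set B₁ := B.subgroupOf K with hB₁
  have hBopen₁ : IsOpen (B₁ : Set ↥K) := by
    have : (B₁ : Set ↥K) = (Subtype.val : ↥K → G) ⁻¹' (B : Set G) := by
      ext x; simp [hB₁, Subgroup.mem_subgroupOf]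
    rw [this]
    exact hBopen.preimage continuous_subtype_val
  have hclopen : IsClopen (B₁ : Set ↥K) :=
    ⟨Subgroup.isClosed_of_isOpen _ hBopen₁, hBopen₁⟩
  obtain ⟨N, hN⟩ := IsTopologicalGroup.exist_openNormalSubgroup_sub_clopen_nhds_of_one hclopen
    (one_mem _)
  obtain ⟨n, hn⟩ := hKproP N.toSubgroup N.isNormal' N.toOpenSubgroup.isOpen
  have hNB : N.toSubgroup ≤ B₁ := hN
  have hNA : N.toSubgroup ≤ A₁ := hNB.trans (Subgroup.comap_mono hBA)
  have h1 : N.toSubgroup.relIndex A₁ * A₁.index = N.toSubgroup.index :=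
    Subgroup.relIndex_mul_index hNA
  have h2 : N.toSubgroup.relIndex A₁ ∣ p ^ n := hn ▸ Dvd.intro _ h1
  have h3 : B₁.relIndex A₁ ∣ N.toSubgroup.relIndex A₁ :=
    Subgroup.relIndex_dvd_of_le_left A₁ hNB
  have hdvd : B₁.relIndex A₁ ∣ p ^ n := h3.trans h2
  have hrel : B.relIndex A = B₁.relIndex A₁ := (Subgroup.relIndex_subgroupOf hA).symm
  obtain ⟨m, -, hm⟩ := (Nat.dvd_prime_pow hp).mp hdvd
  exact ⟨m, by rw [hrel, hm]⟩

/-- For strictly nested open subgroups `B < A ≤ K`, the relative index is nonzero and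
divisible by `p`. -/
lemma relIndex_pdvd {p : ℕ} (hp : p.Prime) (hKproP : IsProPGroup p ↥K)
    {A B : Subgroup G} (hBA : B < A) (hA : A ≤ K) (hAopen : IsOpen (A : Set G))
    (hBopen : IsOpen (B : Set G)) : B.relIndex A ≠ 0 ∧ p ∣ B.relIndex A := by
  obtain ⟨m, hm⟩ := relIndex_isPPow hp hKproP hBA.le hA hAopen hBopen
  have hne : B.relIndex A ≠ 0 := by rw [hm]; exact pow_ne_zero m hp.ne_zero
  refine ⟨hne, ?_⟩
  rcases m with - | m'
  · exfalso
    rw [pow_zero] at hm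
    have htop : B.subgroupOf A = ⊤ := Subgroup.index_eq_one.mp hm
    have : A ≤ B := by
      intro a ha
      have : (⟨a, ha⟩ : ↥A) ∈ B.subgroupOf A := htop ▸ Subgroup.mem_top _
      exact this
    exact hBA.not_ge this
  · rw [hm]; exact dvd_pow_self p m'.succ_ne_zero

end Index

open MulAction Finsupp

attribute [local instance] Finsupp.comapSMul Finsupp.comapMulAction Finsupp.comapDistribMulAction

section Stab

variable {G : Type} [Group G] [TopologicalSpace G] [IsTopologicalGroup G]

/-- The stabilizer of a coset `gH` is the conjugate subgroup `gHg⁻¹`. -/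
lemma stabilizer_coset_eq (H : Subgroup G) (g : G) :
    stabilizer G ((g : G ⧸ H)) = Subgroup.map (MulAut.conj g).toMonoidHom H := by
  ext k
  rw [mem_stabilizer_iff, Subgroup.mem_map_equiv, MulAction.Quotient.smul_mk, eq_comm,
    QuotientGroup.eq]
  have hsymm : (MulAut.conj g).symm k = g⁻¹ * k * g := by simp [MulAut.conj]
  rw [hsymm, smul_eq_mul, ← mul_assoc]

/-- Stabilizers of points of `G ⧸ H` are open when `H` is open. -/
lemma stabilizer_quot_isOpen {H : Subgroup G} (hH : IsOpen (H : Set G)) (y : G ⧸ H) :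
    IsOpen ((stabilizer G y : Subgroup G) : Set G) := by
  induction y using QuotientGroup.induction_on with
  | H g =>
    rw [stabilizer_coset_eq]
    have : ((Subgroup.map (MulAut.conj g).toMonoidHom H : Subgroup G) : Set G) =
        (fun k => g⁻¹ * k * g) ⁻¹' (H : Set G) := by
      ext k
      simp only [Set.mem_preimage, SetLike.mem_coe, Subgroup.mem_map_equiv]
      have : (MulAut.conj g).symm k = g⁻¹ * k * g := by simp [MulAut.conj]
      rw [this]
    rw [this]
    exact hH.preimage (by continuity)

/-- The stabilizer of a point under the action of a subgroup (as a group in its own right). -/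
lemma stabilizer_subgroup_eq {X : Type} [MulAction G X] (S : Subgroup G) (x : X) :
    stabilizer ↥S x = (stabilizer G x).subgroupOf S := by
  ext γ
  rw [mem_stabilizer_iff, Subgroup.mem_subgroupOf, mem_stabilizer_iff]
  rfl

lemma stabilizer_subgroup_index {X : Type} [MulAction G X] (S : Subgroup G) (x : X) :
    (stabilizer ↥S x).index = (S ⊓ stabilizer G x).relIndex S := by
  rw [stabilizer_subgroup_eq, inf_comm, Subgroup.inf_relIndex_right]
  rfl

end Stab

section SigmaAction

variable {G : Type} [Group G]

instance sigmaMulAction {ι : Type} {X : ι → Type} [∀ i, MulAction G (X i)] :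
    MulAction G ((i : ι) × X i) where
  smul g x := ⟨x.1, g • x.2⟩
  one_smul x := by cases x with | mk i y => show Sigma.mk i ((1 : G) • y) = _; rw [one_smul]
  mul_smul g g' x := by
    cases x with | mk i y => show Sigma.mk i ((g * g') • y) = _; rw [mul_smul]; rfl

lemma sigma_smul_def {ι : Type} {X : ι → Type} [∀ i, MulAction G (X i)] (g : G) (i : ι)
    (y : X i) : g • (⟨i, y⟩ : (i : ι) × X i) = ⟨i, g • y⟩ := rfl

lemma sigma_stabilizer_eq {ι : Type} {X : ι → Type} [∀ i, MulAction G (X i)] (i : ι)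
    (y : X i) : stabilizer G (⟨i, y⟩ : (i : ι) × X i) = stabilizer G y := by
  ext k
  rw [mem_stabilizer_iff, mem_stabilizer_iff]
  show (⟨i, k • y⟩ : (i : ι) × X i) = ⟨i, y⟩ ↔ k • y = y
  rw [Sigma.ext_iff]
  simp

end SigmaAction

section QuotMap

variable {G : Type} [Group G]

/-- The natural projection `G ⧸ H₁ → G ⧸ H₂` for nested subgroups `H₁ ≤ H₂`. -/
def quotMap {H₁ H₂ : Subgroup G} (h : H₁ ≤ H₂) : G ⧸ H₁ → G ⧸ H₂ :=
  Quotient.map' id fun a b hab => by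
    rw [QuotientGroup.leftRel_apply] at hab ⊢
    exact h hab

lemma quotMap_mk {H₁ H₂ : Subgroup G} (h : H₁ ≤ H₂) (g : G) :
    quotMap h ((g : G ⧸ H₁)) = (g : G ⧸ H₂) := rfl

lemma quotMap_smul {H₁ H₂ : Subgroup G} (h : H₁ ≤ H₂) (g : G) (y : G ⧸ H₁) :
    quotMap h (g • y) = g • quotMap h y := by
  induction y using QuotientGroup.induction_on with
  | H a =>
    rw [MulAction.Quotient.smul_mk, quotMap_mk, quotMap_mk, MulAction.Quotient.smul_mk]

lemma quotMap_surjective {H₁ H₂ : Subgroup G} (h : H₁ ≤ H₂) :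
    Function.Surjective (quotMap h) := fun y =>
  QuotientGroup.induction_on y fun g => ⟨(g : G ⧸ H₁), rfl⟩

end QuotMap

section FinsuppLayer

variable {F : Type} [Field F] {G : Type} [Group G]

lemma comap_smul_comm {α : Type} [MulAction G α] (g : G) (c : F) (u : α →₀ F) :
    g • (c • u) = c • (g • u) := by
  rw [Finsupp.comapSMul_def, Finsupp.comapSMul_def, Finsupp.mapDomain_smul]

/-- `SMulCommClass` for the comap action and scalars. -/
lemma comap_smulCommClass {α : Type} [MulAction G α] : SMulCommClass G F (α →₀ F) :=
  ⟨fun g c u => comap_smul_comm g c u⟩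

variable [TopologicalSpace G] [IsTopologicalGroup G]

lemma isOpen_finset_inf {ι : Type} (s : Finset ι) (f : ι → Subgroup G)
    (hf : ∀ i ∈ s, IsOpen ((f i : Subgroup G) : Set G)) :
    IsOpen ((s.inf f : Subgroup G) : Set G) := by
  classical
  induction s using Finset.induction_on with
  | empty => simp only [Finset.inf_empty]; rw [Subgroup.coe_top]; exact isOpen_univ
  | insert a s' hx ih =>
    rw [Finset.inf_insert, Subgroup.coe_inf]
    exact (hf a (Finset.mem_insert_self a s')).inter
      (ih fun i hi => hf i (Finset.mem_insert_of_mem hi))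

/-- If all point stabilizers in `α` are open, then `α →₀ F` is a smooth `G`-module. -/
lemma smoothAction_finsupp {α : Type} [MulAction G α]
    (hα : ∀ a : α, IsOpen ((MulAction.stabilizer G a : Subgroup G) : Set G)) :
    SmoothAction G (α →₀ F) := by
  intro u
  set S : Subgroup G := u.support.inf fun a => MulAction.stabilizer G a with hS
  have hSopen : IsOpen (S : Set G) := isOpen_finset_inf _ _ fun a _ => hα a
  have hle : S ≤ MulAction.stabilizer G u := by
    intro k hk
    rw [MulAction.mem_stabilizer_iff, Finsupp.comapSMul_def]
    have : Finsupp.mapDomain (k • ·) u = Finsupp.mapDomain id u := by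
      apply Finsupp.mapDomain_congr
      intro x hx
      exact (Finset.inf_le hx : S ≤ MulAction.stabilizer G x) hk
    rw [this, Finsupp.mapDomain_id]
  exact Subgroup.isOpen_mono hle hSopen

omit [TopologicalSpace G] [IsTopologicalGroup G] in
lemma linearCombination_equivariant {α M : Type} [MulAction G α]
    [AddCommGroup M] [Module F M] [DistribMulAction G M] [SMulCommClass G F M]
    (φ : α → M) (hφ : ∀ (g : G) (a : α), φ (g • a) = g • φ a) (g : G) (u : α →₀ F) :
    Finsupp.linearCombination F φ (g • u) = g • Finsupp.linearCombination F φ u := by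
  rw [Finsupp.comapSMul_def, Finsupp.linearCombination_mapDomain,
    Finsupp.linearCombination_apply, Finsupp.linearCombination_apply, Finsupp.sum, Finsupp.sum,
    Finset.smul_sum]
  refine Finset.sum_congr rfl fun a _ => ?_
  rw [Function.comp_apply, hφ]
  exact (smul_comm g (u a) (φ a)).symm

omit [TopologicalSpace G] [IsTopologicalGroup G] in
lemma mapDomain_equivariant {α β : Type} [MulAction G α] [MulAction G β]
    (π : β → α) (hπ : ∀ (g : G) (x : β), π (g • x) = g • π x) (g : G) (u : β →₀ F) :
    Finsupp.mapDomain π (g • u) = g • Finsupp.mapDomain π u := by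
  rw [Finsupp.comapSMul_def, Finsupp.comapSMul_def, ← Finsupp.mapDomain_comp,
    ← Finsupp.mapDomain_comp]
  congr 1
  funext x
  exact hπ g x

omit [TopologicalSpace G] [IsTopologicalGroup G] in
lemma mapDomain_surjective {α β : Type} (π : β → α) (hπ : Function.Surjective π) :
    Function.Surjective (fun u : β →₀ F => Finsupp.mapDomain π u) := by
  intro v
  induction v using Finsupp.induction_linear with
  | zero => exact ⟨0, Finsupp.mapDomain_zero⟩
  | add f g hf hg =>
    obtain ⟨uf, huf⟩ := hf
    obtain ⟨ug, hug⟩ := hg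
    exact ⟨uf + ug, by simp only [Finsupp.mapDomain_add, huf, hug]⟩
  | single a b =>
    obtain ⟨x, hx⟩ := hπ a
    exact ⟨Finsupp.single x b, by simp only [Finsupp.mapDomain_single, hx]⟩

end FinsuppLayer

section Key

variable {F : Type} [Field F] {p : ℕ} [CharP F p]
variable {G : Type} [Group G] [TopologicalSpace G] [IsTopologicalGroup G]
variable {K : Subgroup G} [CompactSpace K]

/-- Key vanishing lemma: an equivariant map of `G`-sets that strictly shrinks all
`K`-stabilizers kills `K`-invariant vectors of `β →₀ F` in characteristic `p`. -/
lemma mapDomain_kills_invariants (hp : p.Prime) (hKopen : IsOpen (K : Set G))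
    (hKproP : IsProPGroup p ↥K)
    {α β : Type} [MulAction G α] [MulAction G β] (π : β → α)
    (hπ : ∀ (g : G) (x : β), π (g • x) = g • π x)
    (hopenα : ∀ a : α, IsOpen ((MulAction.stabilizer G a : Subgroup G) : Set G))
    (hopenβ : ∀ x : β, IsOpen ((MulAction.stabilizer G x : Subgroup G) : Set G))
    (hfib : ∀ x : β, K ⊓ MulAction.stabilizer G x < K ⊓ MulAction.stabilizer G (π x))
    (u : β →₀ F) (hu : ∀ k ∈ K, k • u = u) :
    Finsupp.mapDomain π u = 0 := by
  classical
  have hinv : ∀ k ∈ K, ∀ y : β, u (k • y) = u y := by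
    intro k hk y
    have h1 : (k • u) (k • y) = u (k • y) := congrArg (fun w : β →₀ F => w (k • y)) (hu k hk)
    rw [Finsupp.comapSMul_apply, inv_smul_smul] at h1
    exact h1.symm
  ext a
  rw [Finsupp.mapDomain, Finsupp.sum_apply, Finsupp.coe_zero, Pi.zero_apply]
  have hrw : (u.sum fun x c => Finsupp.single (π x) c a)
      = ∑ x ∈ u.support.filter (fun x => π x = a), u x := by
    rw [Finsupp.sum, Finset.sum_filter]
    refine Finset.sum_congr rfl fun x _ => ?_
    rw [Finsupp.single_apply]
  rw [hrw]
  set Sa : Subgroup G := K ⊓ MulAction.stabilizer G a with hSa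
  have hmemfilter : ∀ x, x ∈ u.support.filter (fun x => π x = a) ↔ u x ≠ 0 ∧ π x = a := by
    intro x; rw [Finset.mem_filter, Finsupp.mem_support_iff]
  apply sum_eq_zero_of_pdvd (p := p) (Γ := ↥Sa)
  · -- closure
    intro γ x hx
    rw [hmemfilter] at hx ⊢
    have hsmul : γ • x = (γ : G) • x := rfl
    constructor
    · rw [hsmul, hinv (γ : G) γ.2.1 x]; exact hx.1
    · rw [hsmul, hπ, hx.2]; exact γ.2.2
  · -- constancy
    intro γ x hx
    exact hinv (γ : G) γ.2.1 x
  · -- stabilizer indices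
    intro x hx
    rw [hmemfilter] at hx
    have hπx : π x = a := hx.2
    have hsub : MulAction.stabilizer G x ≤ MulAction.stabilizer G a := by
      intro k hk
      rw [MulAction.mem_stabilizer_iff] at hk ⊢
      rw [← hπx, ← hπ, hk]
    have hSeq : Sa ⊓ MulAction.stabilizer G x = K ⊓ MulAction.stabilizer G x := by
      rw [hSa, inf_assoc, inf_eq_right.mpr hsub]
    have hlt : K ⊓ MulAction.stabilizer G x < Sa := by
      rw [hSa, ← hπx]; exact hfib x
    rw [stabilizer_subgroup_index, hSeq]
    exact relIndex_pdvd hp hKproP hlt inf_le_left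
      (by rw [Subgroup.coe_inf]; exact hKopen.inter (hopenα a))
      (by rw [Subgroup.coe_inf]; exact hKopen.inter (hopenβ x))

end Key

section Fixed

variable {F : Type} [Field F] {p : ℕ} [CharP F p]
variable {G : Type} [Group G] [TopologicalSpace G] [IsTopologicalGroup G]
variable {K : Subgroup G} [CompactSpace K]

/-- A nonzero smooth module over a compact open pro-`p` subgroup in characteristic `p` has a
nonzero `K`-fixed vector. -/
lemma exists_nonzero_fixed (hp : p.Prime) (hKopen : IsOpen (K : Set G))
    (hKproP : IsProPGroup p ↥K)
    (P : Type) [AddCommGroup P] [Module F P] [DistribMulAction G P] [SMulCommClass G F P]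
    (hPsmooth : SmoothAction G P) [Nontrivial P] :
    ∃ v : P, v ≠ 0 ∧ ∀ k ∈ K, k • v = v := by
  classical
  haveI : Fact p.Prime := ⟨hp⟩
  obtain ⟨v₀, hv₀⟩ := exists_ne (0 : P)
  -- the `K`-orbit of `v₀` is finite
  have hstabind : (MulAction.stabilizer ↥K v₀).index ≠ 0 := by
    rw [stabilizer_subgroup_index]
    obtain ⟨m, hm⟩ := relIndex_isPPow hp hKproP (B := K ⊓ MulAction.stabilizer G v₀) (A := K)
      inf_le_left le_rfl hKopen
      (by rw [Subgroup.coe_inf]; exact hKopen.inter (hPsmooth v₀))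
    rw [hm]; exact pow_ne_zero _ hp.ne_zero
  have hQfin : Finite (↥K ⧸ MulAction.stabilizer ↥K v₀) := (Nat.card_ne_zero.mp hstabind).2
  haveI horbfin' : Finite (MulAction.orbit ↥K v₀) :=
    Finite.of_equiv _ (MulAction.orbitEquivQuotientStabilizer ↥K v₀).symm
  have horbfin : (MulAction.orbit ↥K v₀).Finite := Set.toFinite _
  set Ofin : Finset P := horbfin.toFinset with hOfin
  -- `p`-torsion
  have hpsmul : ∀ x : P, p • x = 0 := by
    intro x
    rw [← Nat.cast_smul_eq_nsmul F p x, CharP.cast_eq_zero F p, zero_smul]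
  have hmod : ∀ (n : ℕ) (x : P), n • x = (n % p) • x := by
    intro n x
    calc n • x = (p * (n / p) + n % p) • x := by rw [Nat.div_add_mod]
      _ = (n / p) • (p • x) + (n % p) • x := by
          rw [add_nsmul, mul_comm, mul_smul]
      _ = (n % p) • x := by rw [hpsmul, smul_zero, zero_add]
  -- the span set
  set carr : Set P := Set.range (fun c : ↥Ofin → Fin p => ∑ x : ↥Ofin, (c x : ℕ) • (x : P))
    with hcarr
  have hmemhelper : ∀ d : ↥Ofin → ℕ, (∑ x : ↥Ofin, d x • (x : P)) ∈ carr := by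
    intro d
    refine ⟨fun x => ⟨d x % p, Nat.mod_lt _ hp.pos⟩, ?_⟩
    show (∑ x : ↥Ofin, (d x % p) • (x : P)) = _
    exact Finset.sum_congr rfl fun x _ => (hmod (d x) x).symm
  have hOsub : ∀ x : P, ∀ hx : x ∈ Ofin, x ∈ carr := by
    intro x hx
    refine ⟨fun y => if y = (⟨x, hx⟩ : ↥Ofin) then ⟨1, hp.one_lt⟩ else ⟨0, hp.pos⟩, ?_⟩
    show (∑ y : ↥Ofin,
      ((if y = (⟨x, hx⟩ : ↥Ofin) then (⟨1, hp.one_lt⟩ : Fin p) else ⟨0, hp.pos⟩ : Fin p) : ℕ)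
        • (y : P)) = x
    rw [Finset.sum_congr rfl (fun y _ => show _ = if y = (⟨x, hx⟩ : ↥Ofin) then (y : P) else 0 by
      split <;> simp)]
    rw [Fintype.sum_ite_eq' (⟨x, hx⟩ : ↥Ofin) (fun y : ↥Ofin => (y : P))]
  have h0carr : (0 : P) ∈ carr := ⟨fun _ => ⟨0, hp.pos⟩, by simp⟩
  have hv₀O : v₀ ∈ Ofin := by
    rw [Set.Finite.mem_toFinset]; exact MulAction.mem_orbit_self v₀
  have hv₀carr : v₀ ∈ carr := hOsub v₀ hv₀O
  -- closure properties
  have haddmem : ∀ y z : P, y ∈ carr → z ∈ carr → y + z ∈ carr := by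
    rintro _ _ ⟨c, rfl⟩ ⟨c', rfl⟩
    show (∑ x : ↥Ofin, (c x : ℕ) • (x : P)) + (∑ x : ↥Ofin, (c' x : ℕ) • (x : P)) ∈ carr
    rw [← Finset.sum_add_distrib]
    rw [Finset.sum_congr rfl fun (x : ↥Ofin) _ =>
      ((add_nsmul (x : P) (c x : ℕ) (c' x : ℕ)).symm :
        (c x : ℕ) • (x : P) + (c' x : ℕ) • (x : P) = ((c x : ℕ) + (c' x : ℕ)) • (x : P))]
    exact hmemhelper _
  have hnsmulmem : ∀ (m : ℕ) (y : P), y ∈ carr → m • y ∈ carr := by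
    rintro m _ ⟨c, rfl⟩
    show m • (∑ x : ↥Ofin, (c x : ℕ) • (x : P)) ∈ carr
    rw [Finset.smul_sum]
    rw [Finset.sum_congr rfl fun (x : ↥Ofin) _ =>
      ((mul_smul m (c x : ℕ) (x : P)).symm :
        m • ((c x : ℕ) • (x : P)) = (m * (c x : ℕ)) • (x : P))]
    exact hmemhelper _
  have hnegmem : ∀ y : P, y ∈ carr → -y ∈ carr := by
    intro y hy
    have hps : (p - 1) • y + y = 0 := by
      have h1 : (p - 1) • y + 1 • y = ((p - 1) + 1) • y := (add_nsmul y (p - 1) 1).symm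
      rw [one_smul] at h1
      rw [h1, Nat.sub_add_cancel hp.one_le, hpsmul]
    have := eq_neg_of_add_eq_zero_left hps
    rw [← this]
    exact hnsmulmem _ _ hy
  -- K-stability
  have hOstable : ∀ (k : ↥K) (x : P), x ∈ Ofin → k • x ∈ Ofin := by
    intro k x hx
    rw [Set.Finite.mem_toFinset] at hx ⊢
    obtain ⟨γ, hγ⟩ := hx
    simp only [] at hγ
    exact ⟨k * γ, by show (k * γ) • v₀ = k • x; rw [mul_smul, hγ]⟩
  have hcarrstable : ∀ (k : ↥K) (y : P), y ∈ carr → k • y ∈ carr := by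
    rintro k _ ⟨c, rfl⟩
    show k • (∑ x : ↥Ofin, (c x : ℕ) • (x : P)) ∈ carr
    let e : ↥Ofin ≃ ↥Ofin :=
      { toFun := fun x => ⟨k • (x : P), hOstable k _ x.2⟩
        invFun := fun x => ⟨k⁻¹ • (x : P), hOstable k⁻¹ _ x.2⟩
        left_inv := fun x => Subtype.ext (inv_smul_smul k (x : P))
        right_inv := fun x => Subtype.ext (smul_inv_smul k (x : P)) }
    have hdist : k • (∑ x : ↥Ofin, (c x : ℕ) • (x : P))
        = ∑ x : ↥Ofin, (c x : ℕ) • (k • (x : P)) := by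
      rw [Finset.smul_sum]
      exact Finset.sum_congr rfl fun x _ =>
        (DistribMulAction.toAddMonoidHom P k).map_nsmul (c x : ℕ) (x : P)
    rw [hdist]
    have hre : (∑ x : ↥Ofin, (c x : ℕ) • (k • (x : P)))
        = ∑ x : ↥Ofin, ((c (e.symm x) : ℕ)) • (x : P) := by
      rw [← Equiv.sum_comp e (fun x : ↥Ofin => (c (e.symm x) : ℕ) • (x : P))]
      refine Finset.sum_congr rfl fun x _ => ?_
      rw [Equiv.symm_apply_apply]
      rfl
    rw [hre]
    exact ⟨fun x => c (e.symm x), rfl⟩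
  -- assemble the additive subgroup
  set Y : AddSubgroup P :=
    { carrier := carr
      add_mem' := fun ha hb => haddmem _ _ ha hb
      zero_mem' := h0carr
      neg_mem' := fun ha => hnegmem _ ha } with hY
  have hYfin : carr.Finite := Set.finite_range _
  haveI hfinY : Finite ↥Y := hYfin.to_subtype
  have hordp : addOrderOf (⟨v₀, hv₀carr⟩ : ↥Y) = p := by
    apply addOrderOf_eq_prime
    · apply Subtype.ext
      show ((p • (⟨v₀, hv₀carr⟩ : ↥Y) : ↥Y) : P) = 0
      rw [AddSubmonoidClass.coe_nsmul]
      exact hpsmul v₀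
    · intro h
      exact hv₀ (congrArg Subtype.val h)
  have hpcard : p ∣ Nat.card ↥Y := hordp ▸ addOrderOf_dvd_natCard _
  -- counting
  set Yfin : Finset P := hYfin.toFinset with hYfin'
  have hcardY : Yfin.card = Nat.card ↥Y := by
    rw [← Set.ncard_eq_toFinset_card _ hYfin, ← Nat.card_coe_set_eq]
    rfl
  set T : Finset P := Yfin.filter (fun x => ¬ ∀ k : ↥K, k • x = x) with hT
  have hfixed_of : ∀ (γ : ↥K) (x : P), (∀ k : ↥K, k • (γ • x) = γ • x) → ∀ k : ↥K, k • x = x := by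
    intro γ x h k
    have hx : γ • x = x := by
      have := h (1 * γ⁻¹)
      rw [one_mul, inv_smul_smul] at this
      exact this.symm
    rw [hx] at h
    exact h k
  have hsum : ∑ x ∈ T, (1 : F) = 0 := by
    apply sum_eq_zero_of_pdvd (p := p) (Γ := ↥K)
    · intro γ x hx
      rw [hT, Finset.mem_filter] at hx ⊢
      refine ⟨?_, ?_⟩
      · rw [hYfin', Set.Finite.mem_toFinset] at hx ⊢
        exact hcarrstable γ x hx.1
      · intro hfix
        exact hx.2 (hfixed_of γ x hfix)
    · intro _ _ _; rfl
    · intro x hx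
      rw [hT, Finset.mem_filter] at hx
      push_neg at hx
      obtain ⟨k₀, hk₀⟩ := hx.2
      rw [stabilizer_subgroup_index]
      apply relIndex_pdvd hp hKproP ?_ le_rfl hKopen
        (by rw [Subgroup.coe_inf]; exact hKopen.inter (hPsmooth x))
      refine lt_of_le_of_ne inf_le_left ?_
      intro heq
      apply hk₀
      have : (k₀ : G) ∈ K ⊓ MulAction.stabilizer G x := heq.symm ▸ k₀.2
      exact this.2
  have hTcard : p ∣ T.card := by
    rw [Finset.sum_const, nsmul_eq_mul, mul_one] at hsum
    exact (CharP.cast_eq_zero_iff F p _).mp hsum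
  have hsplit : (Yfin.filter fun x => ∀ k : ↥K, k • x = x).card + T.card = Yfin.card := by
    rw [hT]
    simpa using Finset.card_filter_add_card_filter_not
      (s := Yfin) (p := fun x => ∀ k : ↥K, k • x = x)
  have hfixcard : p ∣ (Yfin.filter fun x => ∀ k : ↥K, k • x = x).card := by
    have hYc : p ∣ Yfin.card := hcardY ▸ hpcard
    have heq : (Yfin.filter fun x => ∀ k : ↥K, k • x = x).card
        = Yfin.card - T.card := by omega
    rw [heq]
    exact Nat.dvd_sub hYc hTcard
  have h0mem : (0 : P) ∈ Yfin.filter fun x => ∀ k : ↥K, k • x = x := by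
    rw [Finset.mem_filter]
    exact ⟨by rw [hYfin', Set.Finite.mem_toFinset]; exact h0carr, fun k => smul_zero _⟩
  have hcard2 : 1 < (Yfin.filter fun x => ∀ k : ↥K, k • x = x).card := by
    have hpos : 0 < (Yfin.filter fun x => ∀ k : ↥K, k • x = x).card :=
      Finset.card_pos.mpr ⟨0, h0mem⟩
    have hge : p ≤ (Yfin.filter fun x => ∀ k : ↥K, k • x = x).card :=
      Nat.le_of_dvd hpos hfixcard
    exact lt_of_lt_of_le hp.one_lt hge
  obtain ⟨v, hvmem, hvne⟩ := Finset.exists_mem_ne hcard2 0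
  rw [Finset.mem_filter] at hvmem
  exact ⟨v, hvne, fun k hk => hvmem.2 ⟨k, hk⟩⟩

end Fixed


set_option maxHeartbeats 2000000 in
/-- **Statement 3.**  Let `F` be a field of characteristic `p > 0`, let `G` be a locally
pro-`p` group, and suppose `G` admits an infinite open pro-`p` subgroup `K` such that the
pair `(G, K)` is fair.  Then the only projective object in the category `Mod_F(G)` of
smooth `F[G]`-modules is the zero module. -/
theorem no_nonzero_projectives_of_fair
    (F : Type) [Field F] (p : ℕ) (hp : p ≠ 0) [CharP F p]
    (G : Type) [Group G] [TopologicalSpace G] [IsTopologicalGroup G]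
    (K : Subgroup G) (hKopen : IsOpen (K : Set G))
    [CompactSpace K] [T2Space K] [TotallyDisconnectedSpace K] [Infinite K]
    (hKproP : IsProPGroup p ↥K)
    (hfair : IsFair G K)
    (P : Type) [AddCommGroup P] [Module F P] [DistribMulAction G P] [SMulCommClass G F P]
    (hPsmooth : SmoothAction G P) (hPproj : IsProjectiveSmooth F G P) :
    Subsingleton P := by
  classical
  by_contra hns
  rw [not_subsingleton_iff_nontrivial] at hns
  have hp' : p.Prime := (CharP.char_is_prime_or_zero F p).resolve_right hp
  -- a nonzero K-fixed vector
  obtain ⟨v, hv0, hvK⟩ := exists_nonzero_fixed (F := F) hp' hKopen hKproP P hPsmooth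
  -- subgroups from fairness
  have hHsopen : ∀ w : P, IsOpen (((K ⊓ MulAction.stabilizer G w : Subgroup G)) : Set G) :=
    fun w => by rw [Subgroup.coe_inf]; exact hKopen.inter (hPsmooth w)
  have hfairall : ∀ w : P, ∃ H' : Subgroup G, H' ≤ K ∧ IsOpen ((H' : Subgroup G) : Set G) ∧
      ∀ g : G, K ⊓ Subgroup.map (MulAut.conj g).toMonoidHom H' <
        K ⊓ Subgroup.map (MulAut.conj g).toMonoidHom (K ⊓ MulAction.stabilizer G w) :=
    fun w => hfair (K ⊓ MulAction.stabilizer G w) inf_le_left (hHsopen w)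
  choose H' hH'K hH'open hH'lt using hfairall
  -- the two G-sets
  have hAopen : ∀ a : ((w : P) × (G ⧸ (K ⊓ MulAction.stabilizer G w))),
      IsOpen ((MulAction.stabilizer G a : Subgroup G) : Set G) := by
    rintro ⟨w, y⟩
    rw [sigma_stabilizer_eq]
    exact stabilizer_quot_isOpen (hHsopen w) y
  have hBopen : ∀ x : ((w : P) × (G ⧸ (H' w ⊓ (K ⊓ MulAction.stabilizer G w)))),
      IsOpen ((MulAction.stabilizer G x : Subgroup G) : Set G) := by
    rintro ⟨w, y⟩
    rw [sigma_stabilizer_eq]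
    refine stabilizer_quot_isOpen ?_ y
    rw [Subgroup.coe_inf]
    exact (hH'open w).inter (hHsopen w)
  -- the projection of G-sets
  set π : ((w : P) × (G ⧸ (H' w ⊓ (K ⊓ MulAction.stabilizer G w)))) →
      ((w : P) × (G ⧸ (K ⊓ MulAction.stabilizer G w))) :=
    fun x => ⟨x.1, quotMap inf_le_right x.2⟩ with hπdef
  have hπ : ∀ (g : G) (x : ((w : P) × (G ⧸ (H' w ⊓ (K ⊓ MulAction.stabilizer G w))))),
      π (g • x) = g • π x := by
    rintro g ⟨w, y⟩
    show (⟨w, quotMap inf_le_right (g • y)⟩ :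
      ((w : P) × (G ⧸ (K ⊓ MulAction.stabilizer G w)))) = ⟨w, g • quotMap inf_le_right y⟩
    rw [quotMap_smul]
  have hπsurj : Function.Surjective π := by
    rintro ⟨w, y⟩
    obtain ⟨z, hz⟩ := quotMap_surjective (H₁ := H' w ⊓ (K ⊓ MulAction.stabilizer G w))
      (H₂ := K ⊓ MulAction.stabilizer G w) inf_le_right y
    exact ⟨⟨w, z⟩, by rw [hπdef]; exact congrArg (Sigma.mk w) hz⟩
  -- strict shrinking of K-stabilizers
  have hfib : ∀ x : ((w : P) × (G ⧸ (H' w ⊓ (K ⊓ MulAction.stabilizer G w)))),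
      K ⊓ MulAction.stabilizer G x < K ⊓ MulAction.stabilizer G (π x) := by
    rintro ⟨w, y⟩
    induction y using QuotientGroup.induction_on with
    | H g =>
      have h1 : MulAction.stabilizer G
          ((⟨w, (g : G ⧸ (H' w ⊓ (K ⊓ MulAction.stabilizer G w)))⟩ :
            ((w : P) × (G ⧸ (H' w ⊓ (K ⊓ MulAction.stabilizer G w)))))) =
          Subgroup.map (MulAut.conj g).toMonoidHom (H' w ⊓ (K ⊓ MulAction.stabilizer G w)) := by
        rw [sigma_stabilizer_eq, stabilizer_coset_eq]
      have h2 : MulAction.stabilizer G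
          (π (⟨w, (g : G ⧸ (H' w ⊓ (K ⊓ MulAction.stabilizer G w)))⟩)) =
          Subgroup.map (MulAut.conj g).toMonoidHom (K ⊓ MulAction.stabilizer G w) := by
        show MulAction.stabilizer G
          ((⟨w, quotMap inf_le_right (g : G ⧸ (H' w ⊓ (K ⊓ MulAction.stabilizer G w)))⟩ :
            ((w : P) × (G ⧸ (K ⊓ MulAction.stabilizer G w))))) = _
        rw [quotMap_mk, sigma_stabilizer_eq, stabilizer_coset_eq]
      rw [h1, h2]
      refine lt_of_le_of_lt ?_ (hH'lt w g)
      exact inf_le_inf_left K (Subgroup.map_mono inf_le_left)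
  -- the surjection onto P
  set φ : ((w : P) × (G ⧸ (K ⊓ MulAction.stabilizer G w))) → P :=
    fun a => Quotient.liftOn' a.2 (fun g => g • a.1) (by
      intro g₁ g₂ hab
      rw [QuotientGroup.leftRel_apply] at hab
      have hst : (g₁⁻¹ * g₂) • a.1 = a.1 := hab.2
      show g₁ • a.1 = g₂ • a.1
      calc g₁ • a.1 = g₁ • ((g₁⁻¹ * g₂) • a.1) := by rw [hst]
        _ = (g₁ * (g₁⁻¹ * g₂)) • a.1 := (mul_smul _ _ _).symm
        _ = g₂ • a.1 := by rw [mul_inv_cancel_left]) with hφdef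
  have hφmk : ∀ (w : P) (g : G), φ ⟨w, (g : G ⧸ (K ⊓ MulAction.stabilizer G w))⟩ = g • w :=
    fun w g => rfl
  have hφ : ∀ (g : G) (a : ((w : P) × (G ⧸ (K ⊓ MulAction.stabilizer G w)))),
      φ (g • a) = g • φ a := by
    rintro g ⟨w, y⟩
    induction y using QuotientGroup.induction_on with
    | H b =>
      show φ (⟨w, g • (b : G ⧸ (K ⊓ MulAction.stabilizer G w))⟩) = _
      rw [MulAction.Quotient.smul_mk, hφmk, hφmk, smul_eq_mul, mul_smul]
  have smoothA : SmoothAction G (((w : P) × (G ⧸ (K ⊓ MulAction.stabilizer G w))) →₀ F) :=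
    smoothAction_finsupp hAopen
  have smoothB : SmoothAction G
      (((w : P) × (G ⧸ (H' w ⊓ (K ⊓ MulAction.stabilizer G w)))) →₀ F) :=
    smoothAction_finsupp hBopen
  haveI hc1 : SMulCommClass G F (((w : P) × (G ⧸ (K ⊓ MulAction.stabilizer G w))) →₀ F) :=
    comap_smulCommClass
  haveI hc2 : SMulCommClass G F
      (((w : P) × (G ⧸ (H' w ⊓ (K ⊓ MulAction.stabilizer G w)))) →₀ F) :=
    comap_smulCommClass
  obtain ⟨h₁, h₁equiv, h₁spec⟩ := hPproj
    (((w : P) × (G ⧸ (K ⊓ MulAction.stabilizer G w))) →₀ F) P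
    smoothA hPsmooth
    (Finsupp.linearCombination F φ)
    (fun g u => linearCombination_equivariant φ hφ g u)
    (by
      intro w
      refine ⟨Finsupp.single ⟨w, ((1 : G) : G ⧸ (K ⊓ MulAction.stabilizer G w))⟩ 1, ?_⟩
      rw [Finsupp.linearCombination_single, one_smul, hφmk, one_smul])
    LinearMap.id (fun g x => rfl)
  obtain ⟨h₂, h₂equiv, h₂spec⟩ := hPproj
    (((w : P) × (G ⧸ (H' w ⊓ (K ⊓ MulAction.stabilizer G w)))) →₀ F)
    (((w : P) × (G ⧸ (K ⊓ MulAction.stabilizer G w))) →₀ F)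
    smoothB smoothA
    (Finsupp.lmapDomain F F π)
    (fun g u => by
      show Finsupp.mapDomain π (g • u) = g • Finsupp.mapDomain π u
      exact mapDomain_equivariant π hπ g u)
    (by
      intro u
      obtain ⟨z, hz⟩ := mapDomain_surjective (F := F) π hπsurj u
      exact ⟨z, hz⟩)
    h₁ h₁equiv
  -- conclude
  have hu : ∀ k ∈ K, k • (h₂ v) = h₂ v := fun k hk => by
    rw [← h₂equiv k v, hvK k hk]
  have hzero : Finsupp.mapDomain π (h₂ v) = 0 :=
    mapDomain_kills_invariants hp' hKopen hKproP π hπ hAopen hBopen hfib (h₂ v) hu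
  have hh₁v : h₁ v = 0 := by
    have := h₂spec v
    rw [show (Finsupp.lmapDomain F F π) (h₂ v) = Finsupp.mapDomain π (h₂ v) from rfl,
      hzero] at this
    exact this.symm
  have hvzero : v = 0 := by
    have := h₁spec v
    rw [hh₁v, map_zero] at this
    exact this.symm
  exact hv0 hvzero
end

section
/- Let G be a locally profinite group, K ⊆ G a profinite open subgroup, and C ⊆ G a closed central subgroup which is not open in G. Then the indices [K : U(C ∩ K)] become arbitrarily large: for every natural number n there exists an open subgroup U ⊆ K with [K : U(C ∩ K)] > n. -/
open scoped Pointwise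

/-- Let `G` be a locally profinite group, `K ⊆ G` a profinite open
subgroup, and `C ⊆ G` a closed central subgroup which is not open in `G`.  Then the indices
`[K : U(C ∩ K)]` become arbitrarily large: for every natural number `n` there exists an
open subgroup `U ⊆ K` with `[K : U(C ∩ K)] > n`.  (Since `C` is central, the set
`U(C ∩ K)` is the subgroup `U ⊔ (C ⊓ K)` of `K`, and `[K : U(C ∩ K)]` is its relative
index in `K`.) -/
theorem index_UCK_unbounded
    (G : Type) [Group G] [TopologicalSpace G] [IsTopologicalGroup G]
    (K : Subgroup G) (hKopen : IsOpen (K : Set G))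
    [CompactSpace K] [T2Space K] [TotallyDisconnectedSpace K]
    (C : Subgroup G) (hCcentral : C ≤ Subgroup.center G)
    (hCclosed : IsClosed (C : Set G)) (hCnotopen : ¬ IsOpen (C : Set G))
    (n : ℕ) :
    ∃ U : Subgroup G, U ≤ K ∧ IsOpen (U : Set G) ∧ n < (U ⊔ (C ⊓ K)).relIndex K := by
  haveI hCKnormal : (C ⊓ K).Normal := by
    constructor
    intro c hc g
    have hcen : c ∈ Subgroup.center G := hCcentral hc.1
    rw [Subgroup.mem_center_iff] at hcen
    rw [hcen g, mul_assoc, mul_inv_cancel, mul_one]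
    exact hc
  set H : Subgroup K := (C ⊓ K).subgroupOf K with hHdef
  have hHset : (H : Set K) = Subtype.val ⁻¹' (C : Set G) := by
    ext x
    simp [hHdef, Subgroup.mem_subgroupOf, x.2]
  have hHclosed : IsClosed (H : Set K) := by
    rw [hHset]; exact hCclosed.preimage continuous_subtype_val
  -- `H` has infinite index in `K`
  have hHindex : H.index = 0 := by
    by_contra h
    haveI : H.FiniteIndex := ⟨h⟩
    have hHopen : IsOpen (H : Set K) :=
      Subgroup.isOpen_of_isClosed_of_finiteIndex H hHclosed
    have himg : ((C ⊓ K : Subgroup G) : Set G) = Subtype.val '' (H : Set K) := by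
      ext x
      constructor
      · intro hx
        exact ⟨⟨x, hx.2⟩, Subgroup.mem_subgroupOf.mpr hx, rfl⟩
      · rintro ⟨y, hy, rfl⟩
        exact Subgroup.mem_subgroupOf.mp hy
    have hCKopen : IsOpen ((C ⊓ K : Subgroup G) : Set G) := by
      rw [himg]
      exact hKopen.isOpenMap_subtype_val _ hHopen
    exact hCnotopen (Subgroup.isOpen_mono inf_le_left hCKopen)
  have hinf : Infinite (K ⧸ H) := by
    have hcard : Nat.card (K ⧸ H) = 0 := hHindex
    rcases Nat.card_eq_zero.mp hcard with h | h
    · exact (h.false (QuotientGroup.mk (1 : K))).elim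
    · exact h
  -- choose representatives of `n+1` distinct cosets of `H`
  obtain ⟨e⟩ : Nonempty (Fin (n + 1) ↪ K ⧸ H) :=
    ⟨(Fin.valEmbedding).trans (Infinite.natEmbedding _)⟩
  set k : Fin (n + 1) → K := fun i => (e i).out with hkdef
  have hk : ∀ i, QuotientGroup.mk (k i) = e i := fun i => Quotient.out_eq _
  -- the "bad" compact set
  set T : Set K := ⋃ p ∈ {p : Fin (n + 1) × Fin (n + 1) | p.1 ≠ p.2},
      (fun c => (k p.2)⁻¹ * k p.1 * c⁻¹) '' (H : Set K) with hTdef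
  have hTcompact : IsCompact T := by
    apply Set.Finite.isCompact_biUnion (Set.toFinite _)
    intro p _
    exact (hHclosed.isCompact).image (by continuity)
  have h1T : (1 : K) ∉ T := by
    intro h1
    rw [hTdef] at h1
    simp only [Set.mem_iUnion, Set.mem_image] at h1
    obtain ⟨p, hp, c, hc, hc1⟩ := h1
    apply hp
    apply e.injective
    rw [← hk p.1, ← hk p.2]
    have h3 : (k p.2)⁻¹ * k p.1 = c := mul_inv_eq_one.mp hc1
    have h4 : k p.1 = k p.2 * c := inv_mul_eq_iff_eq_mul.mp h3
    rw [h4, QuotientGroup.mk_mul_of_mem _ hc]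
  -- find a clopen neighborhood of 1 inside `Tᶜ`, then an open subgroup inside it
  have hTopen : IsOpen Tᶜ := hTcompact.isClosed.isOpen_compl
  obtain ⟨W, hWclopen, h1W, hWsub⟩ :=
    isTopologicalBasis_isClopen.mem_nhds_iff.mp (hTopen.mem_nhds h1T)
  obtain ⟨U', hU'W⟩ :=
    IsTopologicalGroup.exist_openNormalSubgroup_sub_clopen_nhds_of_one hWclopen h1W
  refine ⟨(U'.toOpenSubgroup.toSubgroup).map K.subtype, Subgroup.map_subtype_le _, ?_, ?_⟩
  · have : ((U'.toOpenSubgroup.toSubgroup.map K.subtype : Subgroup G) : Set G)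
        = Subtype.val '' (U'.toOpenSubgroup.toSubgroup : Set K) := by
      simp [Subgroup.coe_map, Subgroup.coe_subtype]
    rw [this]
    exact hKopen.isOpenMap_subtype_val _ U'.isOpen
  · set U : Subgroup G := U'.toOpenSubgroup.toSubgroup.map K.subtype with hUdef
    set J : Subgroup K := (U ⊔ (C ⊓ K)).subgroupOf K with hJdef
    have hU'J : U'.toOpenSubgroup.toSubgroup ≤ J := by
      intro x hx
      rw [hJdef, Subgroup.mem_subgroupOf]
      exact le_sup_left (α := Subgroup G) (Subgroup.mem_map_of_mem _ hx)
    haveI : Finite (K ⧸ U'.toOpenSubgroup.toSubgroup) :=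
      Subgroup.quotient_finite_of_isOpen _ U'.isOpen
    haveI : U'.toOpenSubgroup.toSubgroup.FiniteIndex :=
      Subgroup.finiteIndex_of_finite_quotient (H := U'.toOpenSubgroup.toSubgroup)
    haveI hJfin : J.FiniteIndex := Subgroup.finiteIndex_of_le hU'J
    haveI : Finite (K ⧸ J) := Subgroup.finite_quotient_of_finiteIndex (H := J)
    have hinj : Function.Injective (fun i : Fin (n + 1) => (QuotientGroup.mk (k i) : K ⧸ J)) := by
      intro i j hij
      by_contra hne
      have hmem : (k i)⁻¹ * k j ∈ J := (QuotientGroup.eq).mp hij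
      rw [hJdef, Subgroup.mem_subgroupOf] at hmem
      have hmem' : ((k i)⁻¹ * k j : K).val ∈ (U : Set G) * ((C ⊓ K : Subgroup G) : Set G) := by
        rw [← Subgroup.mul_normal U (C ⊓ K)]
        exact_mod_cast hmem
      obtain ⟨u, hu, c, hc, huc⟩ := hmem'
      obtain ⟨u', hu', rfl⟩ := hu
      set c' : K := ⟨c, hc.2⟩ with hc'def
      have hc'H : c' ∈ H := by
        rw [hHdef, Subgroup.mem_subgroupOf]; exact hc
      have hu'eq : (u' : K) = (k i)⁻¹ * k j * c'⁻¹ := by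
        apply Subtype.ext
        push_cast
        have : (u' : G) = ((k i)⁻¹ * k j : K).val * c⁻¹ := by
          rw [← huc, mul_assoc, mul_inv_cancel, mul_one]
          rfl
        simpa [hc'def] using this
      have hu'T : (u' : K) ∈ T := by
        rw [hTdef]
        simp only [Set.mem_iUnion, Set.mem_image]
        exact ⟨(j, i), fun h => hne (h.symm), c', hc'H, hu'eq.symm⟩
      exact (hWsub (hU'W hu')) hu'T
    have hcard : n + 1 ≤ Nat.card (K ⧸ J) := by
      calc n + 1 = Nat.card (Fin (n + 1)) := by simp
        _ ≤ Nat.card (K ⧸ J) := Nat.card_le_card_of_injective _ hinj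
    have : (U ⊔ (C ⊓ K)).relIndex K = J.index := rfl
    rw [this]
    have : J.index = Nat.card (K ⧸ J) := rfl
    omega
end

section
/- Let G be a locally profinite group, K ⊆ G a profinite open subgroup, and C ⊆ G a closed central subgroup. Then the pair (G,K) is C-fair if and only if the pair (G/C, KC/C) is fair, where KC/C is the (profinite, open) image of K in the quotient group G/C. -/
/-- For a closed central subgroup `C ⊆ G`, the pair `(G, K)` is *`C`-fair* if for every
open subgroup `H ⊆ K` there exists an open subgroup `H' ⊆ K` such that
`K ∩ gH'Cg⁻¹ ⊊ K ∩ gHCg⁻¹` (strict inclusion) for all `g ∈ G`.  (Since `C` is central,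
the set `HC` is the subgroup `H ⊔ C`.) -/
def IsCFair (G : Type) [Group G] [TopologicalSpace G] (K C : Subgroup G) : Prop :=
  ∀ H : Subgroup G, H ≤ K → IsOpen (H : Set G) →
    ∃ H' : Subgroup G, H' ≤ K ∧ IsOpen (H' : Set G) ∧
      ∀ g : G,
        K ⊓ Subgroup.map (MulAut.conj g).toMonoidHom (H' ⊔ C) <
          K ⊓ Subgroup.map (MulAut.conj g).toMonoidHom (H ⊔ C)


section Aux

variable {G : Type} [Group G]

private lemma aux_map_inf (C : Subgroup G) [C.Normal] (A B : Subgroup G) (hB : C ≤ B) :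
    Subgroup.map (QuotientGroup.mk' C) (A ⊓ B) =
      Subgroup.map (QuotientGroup.mk' C) A ⊓ Subgroup.map (QuotientGroup.mk' C) B := by
  apply le_antisymm
  · exact le_inf (Subgroup.map_mono inf_le_left) (Subgroup.map_mono inf_le_right)
  · rintro x ⟨hx1, hx2⟩
    obtain ⟨a, ha, rfl⟩ := hx1
    obtain ⟨b, hb, hba⟩ := hx2
    have hc : b⁻¹ * a ∈ C := by
      rw [← QuotientGroup.ker_mk' C, MonoidHom.mem_ker, map_mul, map_inv, hba]
      group
    refine ⟨a, ⟨ha, ?_⟩, rfl⟩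
    have : a = b * (b⁻¹ * a) := by group
    rw [this]; exact B.mul_mem hb (hB hc)

private lemma aux_le_iff (C : Subgroup G) [C.Normal] (K X Y : Subgroup G) (hY : C ≤ Y) :
    K ⊓ X ≤ K ⊓ Y ↔
      Subgroup.map (QuotientGroup.mk' C) (K ⊓ X) ≤ Subgroup.map (QuotientGroup.mk' C) (K ⊓ Y) := by
  constructor
  · exact Subgroup.map_mono
  · intro hm a ha
    obtain ⟨b, hb, hba⟩ := Subgroup.mem_map.mp (hm (Subgroup.mem_map.mpr ⟨a, ha, rfl⟩))
    have hc : b⁻¹ * a ∈ C := by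
      rw [← QuotientGroup.ker_mk' C, MonoidHom.mem_ker, map_mul, map_inv, hba]
      group
    refine ⟨ha.1, ?_⟩
    have : a = b * (b⁻¹ * a) := by group
    rw [this]; exact Y.mul_mem hb.2 (hY hc)

private lemma aux_lt_iff (C : Subgroup G) [C.Normal] (K X Y : Subgroup G)
    (hX : C ≤ X) (hY : C ≤ Y) :
    K ⊓ X < K ⊓ Y ↔
      Subgroup.map (QuotientGroup.mk' C) (K ⊓ X) < Subgroup.map (QuotientGroup.mk' C) (K ⊓ Y) := by
  rw [lt_iff_le_not_ge, lt_iff_le_not_ge, aux_le_iff C K X Y hY, aux_le_iff C K Y X hX]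

private lemma aux_conj (C : Subgroup G) [C.Normal] (g : G) (H : Subgroup G) :
    Subgroup.map (QuotientGroup.mk' C) (Subgroup.map (MulAut.conj g).toMonoidHom H) =
      Subgroup.map (MulAut.conj ((QuotientGroup.mk' C) g)).toMonoidHom
        (Subgroup.map (QuotientGroup.mk' C) H) := by
  rw [Subgroup.map_map, Subgroup.map_map]
  congr 1

private lemma aux_C_le (C : Subgroup G) [C.Normal] (g : G) (H : Subgroup G) :
    C ≤ Subgroup.map (MulAut.conj g).toMonoidHom (H ⊔ C) := by
  intro c hc
  refine ⟨g⁻¹ * c * g, Subgroup.mem_sup_right ?_, ?_⟩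
  · simpa using Subgroup.Normal.conj_mem ‹C.Normal› c hc g⁻¹
  · simp [MulAut.conj_apply]; group

private lemma aux_mapC (C : Subgroup G) [C.Normal] :
    Subgroup.map (QuotientGroup.mk' C) C = ⊥ := by
  rw [eq_bot_iff]
  rintro x ⟨c, hc, rfl⟩
  simpa [Subgroup.mem_bot] using (QuotientGroup.eq_one_iff c).mpr hc

private lemma aux_img (C : Subgroup G) [C.Normal] (K : Subgroup G) (g : G) (H : Subgroup G) :
    Subgroup.map (QuotientGroup.mk' C) (K ⊓ Subgroup.map (MulAut.conj g).toMonoidHom (H ⊔ C)) =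
      Subgroup.map (QuotientGroup.mk' C) K ⊓
        Subgroup.map (MulAut.conj ((QuotientGroup.mk' C) g)).toMonoidHom
          (Subgroup.map (QuotientGroup.mk' C) H) := by
  rw [aux_map_inf C K _ (aux_C_le C g H), aux_conj, Subgroup.map_sup, aux_mapC, sup_bot_eq]

private lemma aux_comap (C : Subgroup G) [C.Normal] (K : Subgroup G) (A : Subgroup (G ⧸ C))
    (hA : A ≤ Subgroup.map (QuotientGroup.mk' C) K) :
    Subgroup.map (QuotientGroup.mk' C) (Subgroup.comap (QuotientGroup.mk' C) A ⊓ K) = A := by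
  have hCle : C ≤ Subgroup.comap (QuotientGroup.mk' C) A := by
    intro c hc
    simp only [Subgroup.mem_comap]
    have : (QuotientGroup.mk' C) c = 1 := (QuotientGroup.eq_one_iff c).mpr hc
    rw [this]; exact A.one_mem
  rw [inf_comm, aux_map_inf C K _ hCle,
    Subgroup.map_comap_eq_self_of_surjective (QuotientGroup.mk'_surjective C) A,
    inf_eq_right.mpr hA]

end Aux

/-- **Statement 7.**  Let `G` be a locally profinite group, `K ⊆ G` a profinite open
subgroup, and `C ⊆ G` a closed central subgroup.  Then the pair `(G, K)` is `C`-fair if and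
only if the pair `(G/C, KC/C)` is fair, where `KC/C` is the image of `K` in the quotient
group `G/C`. -/
theorem isCFair_iff_isFair_quotient
    (G : Type) [Group G] [TopologicalSpace G] [IsTopologicalGroup G]
    (K : Subgroup G) (hKopen : IsOpen (K : Set G))
    [CompactSpace K] [T2Space K] [TotallyDisconnectedSpace K]
    (C : Subgroup G) [C.Normal] (hCcentral : C ≤ Subgroup.center G)
    (hCclosed : IsClosed (C : Set G)) :
    IsCFair G K C ↔ IsFair (G ⧸ C) (Subgroup.map (QuotientGroup.mk' C) K) := by
  have hcont : Continuous (QuotientGroup.mk' C) := continuous_quotient_mk'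
  have hopenmap : IsOpenMap (QuotientGroup.mk' C) := QuotientGroup.isOpenMap_coe
  constructor
  · intro hC A hAK hAopen
    obtain ⟨H', hH'K, hH'open, hH'⟩ := hC (Subgroup.comap (QuotientGroup.mk' C) A ⊓ K)
      inf_le_right (by
        rw [Subgroup.coe_inf, Subgroup.coe_comap]
        exact (hAopen.preimage hcont).inter hKopen)
    refine ⟨Subgroup.map (QuotientGroup.mk' C) H', Subgroup.map_mono hH'K, ?_, ?_⟩
    · rw [Subgroup.coe_map]; exact hopenmap _ hH'open
    · intro gb
      obtain ⟨g, rfl⟩ := QuotientGroup.mk'_surjective C gb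
      have key := (aux_lt_iff C K _ _ (aux_C_le C g H') (aux_C_le C g _)).mp (hH' g)
      rwa [aux_img, aux_img, aux_comap C K A hAK] at key
  · intro hFair H hHK hHopen
    obtain ⟨A, hAK, hAopen, hA⟩ := hFair (Subgroup.map (QuotientGroup.mk' C) H)
      (Subgroup.map_mono hHK) (by rw [Subgroup.coe_map]; exact hopenmap _ hHopen)
    refine ⟨Subgroup.comap (QuotientGroup.mk' C) A ⊓ K, inf_le_right, (by
        rw [Subgroup.coe_inf, Subgroup.coe_comap]
        exact (hAopen.preimage hcont).inter hKopen), ?_⟩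
    intro g
    rw [aux_lt_iff C K _ _ (aux_C_le C g _) (aux_C_le C g H), aux_img, aux_img,
      aux_comap C K A hAK]
    exact hA ((QuotientGroup.mk' C) g)
end

section
/- Let G be a locally profinite group whose center Z(G) is non-discrete (in the subspace topology). Then the pair (G,K) is fair for every profinite open subgroup K ⊆ G. -/
/-- **Statement 9.**  Let `G` be a locally profinite group whose center `Z(G)` is
non-discrete (in the subspace topology).  Then the pair `(G, K)` is fair for every
profinite open subgroup `K ⊆ G`. -/
theorem isFair_of_nondiscrete_center
    (G : Type) [Group G] [TopologicalSpace G] [IsTopologicalGroup G]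
    (hloc : ∃ K₀ : Subgroup G, IsOpen (K₀ : Set G) ∧ CompactSpace K₀ ∧ T2Space K₀ ∧
      TotallyDisconnectedSpace K₀)
    (hZ : ¬ DiscreteTopology ↥(Subgroup.center G))
    (K : Subgroup G) (hKopen : IsOpen (K : Set G))
    [CompactSpace K] [T2Space K] [TotallyDisconnectedSpace K] :
    IsFair G K := by
  intro H hHK hHopen
  -- Step 1: a nontrivial central element inside H
  have hz : ∃ z : G, z ∈ Subgroup.center G ∧ z ∈ H ∧ z ≠ 1 := by
    by_contra hcon
    push_neg at hcon
    apply hZ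
    rw [discreteTopology_iff_isOpen_singleton_one]
    have heq : ({1} : Set ↥(Subgroup.center G)) = Subtype.val ⁻¹' (H : Set G) := by
      ext x
      simp only [Set.mem_singleton_iff, Set.mem_preimage, SetLike.mem_coe]
      constructor
      · rintro rfl; exact H.one_mem
      · intro hx; exact Subtype.ext (hcon x x.2 hx)
    rw [heq]
    exact hHopen.preimage continuous_subtype_val
  obtain ⟨z, hzc, hzH, hz1⟩ := hz
  have hzK : z ∈ K := hHK hzH
  -- Step 2: an open subgroup of K avoiding z
  haveI : TotallySeparatedSpace ↥K := loc_compact_t2_tot_disc_iff_tot_sep.mp inferInstance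
  have hzK1 : ((1 : ↥K) : ↥K) ≠ ⟨z, hzK⟩ := by
    intro h; exact hz1 (congrArg Subtype.val h).symm
  obtain ⟨W, hWclopen, hW1, hWz⟩ := exists_isClopen_of_totally_separated hzK1
  obtain ⟨U, hUW⟩ := IsTopologicalGroup.exist_openSubgroup_sub_clopen_nhds_of_one hWclopen hW1
  set U' : Subgroup G := U.toSubgroup.map K.subtype with hU'def
  have hU'open : IsOpen (U' : Set G) := by
    have : (U' : Set G) = Subtype.val '' (U : Set ↥K) := by
      ext x
      simp [hU'def, Subgroup.mem_map, Set.mem_image]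
    rw [this]
    exact hKopen.isOpenMap_subtype_val _ U.isOpen
  have hU'K : U' ≤ K := by
    rintro x ⟨y, _, rfl⟩
    exact y.2
  have hzU' : z ∉ U' := by
    rintro ⟨y, hy, hyz⟩
    apply hWz
    have : y = ⟨z, hzK⟩ := Subtype.ext hyz
    rw [← this]
    exact hUW hy
  -- Step 3: H' := H ⊓ U'
  refine ⟨H ⊓ U', inf_le_left.trans hHK, hHopen.inter hU'open, fun g => ?_⟩
  have hcomm : ∀ x : G, x * z * x⁻¹ = z := by
    intro x
    rw [Subgroup.mem_center_iff.mp hzc x, mul_inv_cancel_right]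
  have hle : K ⊓ Subgroup.map (MulAut.conj g).toMonoidHom (H ⊓ U') ≤
      K ⊓ Subgroup.map (MulAut.conj g).toMonoidHom H :=
    inf_le_inf_left _ (Subgroup.map_mono inf_le_left)
  refine lt_of_le_of_ne hle ?_
  intro heq
  have hzR : z ∈ K ⊓ Subgroup.map (MulAut.conj g).toMonoidHom H := by
    refine ⟨hzK, ⟨z, hzH, ?_⟩⟩
    simpa using hcomm g
  rw [← heq] at hzR
  obtain ⟨-, x, hx, hxz⟩ := hzR
  simp only [MulEquiv.coe_toMonoidHom, MulAut.conj_apply] at hxz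
  have hxzeq : x = z := by
    have h2 : g * x * g⁻¹ = g * z * g⁻¹ := by rw [hxz, hcomm g]
    exact mul_left_cancel (mul_right_cancel h2)
  rw [hxzeq] at hx
  exact hzU' hx.2
end

section
/- Let G be a locally profinite group which has a weak Cartan decomposition, i.e., there exist a compact subset 𝒞 ⊆ G and a non-discrete subgroup S ⊆ G such that G = 𝒞 · Z_G(S) · 𝒞, where Z_G(S) is the centralizer of S in G. Then the pair (G,K) is fair for every compact open subgroup K ⊆ G. -/
/-- In a group with a profinite open subgroup, every neighborhood of `1` contains an
open subgroup. -/
lemma exists_openSubgroup_subset_of_profinite_open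
    {G : Type} [Group G] [TopologicalSpace G] [IsTopologicalGroup G]
    (K₀ : Subgroup G) (hK₀open : IsOpen (K₀ : Set G)) [CompactSpace K₀] [T2Space K₀]
    [TotallyDisconnectedSpace K₀] {U : Set G} (hUo : IsOpen U) (hU1 : (1 : G) ∈ U) :
    ∃ W : Subgroup G, IsOpen (W : Set G) ∧ (W : Set G) ⊆ U := by
  have hUK : ((↑) ⁻¹' U : Set K₀) ∈ nhds (1 : K₀) :=
    (hUo.preimage continuous_subtype_val).mem_nhds (by simpa using hU1)
  obtain ⟨V, ⟨hV1, hVclopen⟩, hVU⟩ := (nhds_basis_clopen (1 : K₀)).mem_iff.mp hUK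
  obtain ⟨W, hW⟩ :=
    IsTopologicalGroup.exist_openSubgroup_sub_clopen_nhds_of_one hVclopen hV1
  refine ⟨Subgroup.map K₀.subtype W.toSubgroup, ?_, ?_⟩
  · have h : (Subgroup.map K₀.subtype W.toSubgroup : Set G) = (↑) '' (W : Set K₀) := rfl
    rw [h]
    exact hK₀open.isOpenEmbedding_subtypeVal.isOpenMap _ W.isOpen
  · rintro x ⟨y, hy, rfl⟩
    exact hVU (hW hy)

/-- Let `G` be a locally profinite group which has a weak Cartan
decomposition, i.e. there exist a compact subset `𝒞 ⊆ G` and a non-discrete subgroup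
`S ⊆ G` such that `G = 𝒞 ⋅ Z_G(S) ⋅ 𝒞`, where `Z_G(S)` is the centralizer of `S` in `G`.
Then the pair `(G, K)` is fair for every compact open subgroup `K ⊆ G`. -/
theorem isFair_of_weakCartan
    (G : Type) [Group G] [TopologicalSpace G] [IsTopologicalGroup G]
    (hloc : ∃ K₀ : Subgroup G, IsOpen (K₀ : Set G) ∧ CompactSpace K₀ ∧ T2Space K₀ ∧
      TotallyDisconnectedSpace K₀)
    (C : Set G) (S : Subgroup G)
    (hCcompact : IsCompact C)
    (hSnondiscrete : ¬ DiscreteTopology ↥S)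
    (hCartan : ∀ g : G, ∃ c ∈ C, ∃ z ∈ Subgroup.centralizer (S : Set G), ∃ c' ∈ C,
      g = c * z * c')
    (K : Subgroup G) (hKcompact : IsCompact (K : Set G)) (hKopen : IsOpen (K : Set G)) :
    IsFair G K := by
  obtain ⟨K₀, hK₀open, hK₀cpt, hK₀t2, hK₀td⟩ := hloc
  -- G is Hausdorff
  haveI : T2Space G := by
    rw [IsTopologicalGroup.t2Space_iff_one_closed]
    have hone : IsClosed ({(1 : K₀)} : Set K₀) := isClosed_singleton
    obtain ⟨F, hF, hFe⟩ := isClosed_induced_iff.mp hone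
    have heq : ({1} : Set G) = F ∩ (K₀ : Set G) := by
      ext x
      constructor
      · rintro rfl
        have : (1 : K₀) ∈ Subtype.val ⁻¹' F := by rw [hFe]; rfl
        exact ⟨this, K₀.one_mem⟩
      · rintro ⟨hxF, hxK⟩
        have : (⟨x, hxK⟩ : K₀) ∈ Subtype.val ⁻¹' F := hxF
        rw [hFe] at this
        simpa [Subtype.ext_iff] using this
    rw [heq]
    exact hF.inter (K₀.isClosed_of_isOpen hK₀open)
  intro H hHK hHopen
  -- the open set of elements whose `C`-conjugates land in `K` and `H`
  set T : Set G := {x : G | ∀ c ∈ C, c * x * c⁻¹ ∈ K ∧ c⁻¹ * x * c ∈ H} with hTdef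
  have hTopen : IsOpen T := by
    rw [isOpen_iff_mem_nhds]
    intro x hx
    have key : ∀ᶠ x' in nhds x, ∀ c ∈ C, c * x' * c⁻¹ ∈ K ∧ c⁻¹ * x' * c ∈ H := by
      apply hCcompact.eventually_forall_of_forall_eventually
        (P := fun x' c => c * x' * c⁻¹ ∈ K ∧ c⁻¹ * x' * c ∈ H)
      intro c hc
      have h1 : IsOpen {z : G × G | z.2 * z.1 * z.2⁻¹ ∈ (K : Set G)} :=
        hKopen.preimage (by fun_prop)
      have h2 : IsOpen {z : G × G | z.2⁻¹ * z.1 * z.2 ∈ (H : Set G)} :=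
        hHopen.preimage (by fun_prop)
      have hmem : (x, c) ∈ {z : G × G | z.2 * z.1 * z.2⁻¹ ∈ (K : Set G)} ∩
          {z : G × G | z.2⁻¹ * z.1 * z.2 ∈ (H : Set G)} := ⟨(hx c hc).1, (hx c hc).2⟩
      exact Filter.eventually_of_mem (((h1.inter h2).mem_nhds hmem)) fun z hz => ⟨hz.1, hz.2⟩
    exact key
  have h1T : (1 : G) ∈ T := fun c hc => by simp [K.one_mem, H.one_mem]
  -- a nontrivial element of `S` in `T`
  have hs : ∃ s : G, s ∈ S ∧ s ∈ T ∧ s ≠ 1 := by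
    by_contra hcon
    push_neg at hcon
    apply hSnondiscrete
    rw [discreteTopology_iff_isOpen_singleton_one]
    have heq : ({1} : Set ↥S) = ((↑) ⁻¹' T : Set ↥S) := by
      ext ⟨a, ha⟩
      simp only [Set.mem_singleton_iff, Set.mem_preimage, Subtype.ext_iff]
      constructor
      · intro h
        simpa [h] using h1T
      · intro h
        exact hcon a ha h
    rw [heq]
    exact hTopen.preimage continuous_subtype_val
  obtain ⟨s, hsS, hsT, hsne⟩ := hs
  -- the compact set of `C`-conjugates of `s`, avoiding `1`
  set D : Set G := (fun c => c⁻¹ * s * c) '' C with hDdef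
  have hDcompact : IsCompact D := hCcompact.image (by fun_prop)
  have h1D : (1 : G) ∉ D := by
    rintro ⟨c, hc, hce⟩
    apply hsne
    have hce' : c⁻¹ * s * c = 1 := hce
    have h : s = c * (c⁻¹ * s * c) * c⁻¹ := by group
    rw [hce'] at h
    simpa using h
  obtain ⟨W, hWopen, hWsub⟩ :=
    exists_openSubgroup_subset_of_profinite_open K₀ hK₀open
      hDcompact.isClosed.isOpen_compl h1D
  refine ⟨H ⊓ W, inf_le_left.trans hHK, ?_, ?_⟩
  · rw [Subgroup.coe_inf]
    exact hHopen.inter hWopen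
  intro g
  obtain ⟨c, hc, z, hz, c', hc', hg⟩ := hCartan g
  have hzs : z * s * z⁻¹ = s := by
    rw [← Subgroup.mem_centralizer_iff.mp hz s hsS]
    group
  have hzs' : z⁻¹ * s * z = s := by
    rw [mul_assoc, Subgroup.mem_centralizer_iff.mp hz s hsS]
    group
  rw [SetLike.lt_iff_le_and_exists]
  refine ⟨inf_le_inf le_rfl (Subgroup.map_mono inf_le_left), c * s * c⁻¹, ?_, ?_⟩
  · rw [Subgroup.mem_inf]
    refine ⟨(hsT c hc).1, ?_⟩
    rw [Subgroup.mem_map]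
    refine ⟨c'⁻¹ * s * c', (hsT c' hc').2, ?_⟩
    show g * (c'⁻¹ * s * c') * g⁻¹ = c * s * c⁻¹
    subst hg
    calc (c * z * c') * (c'⁻¹ * s * c') * (c * z * c')⁻¹
        = c * (z * s * z⁻¹) * c⁻¹ := by group
      _ = c * s * c⁻¹ := by rw [hzs]
  · rw [Subgroup.mem_inf]
    rintro ⟨-, hmem⟩
    rw [Subgroup.mem_map] at hmem
    obtain ⟨a, haHW, hae⟩ := hmem
    have hae' : g * a * g⁻¹ = c * s * c⁻¹ := hae
    have haD : a ∈ D := by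
      have : a = g⁻¹ * (c * s * c⁻¹) * g := by
        rw [← hae']; group
      have ha : a = c'⁻¹ * s * c' := by
        rw [this, hg]
        calc (c * z * c')⁻¹ * (c * s * c⁻¹) * (c * z * c')
            = c'⁻¹ * (z⁻¹ * s * z) * c' := by group
          _ = c'⁻¹ * s * c' := by rw [hzs']
      exact ⟨c', hc', ha.symm⟩
    exact hWsub (Subgroup.mem_inf.mp haHW).2 haD
end

section
/- Let G be a topological group with a weak Cartan decomposition G = 𝒞 · Z_G(S) · 𝒞 (𝒞 ⊆ G a compact subset, S ⊆ G a non-discrete subgroup), and let A be a closed central subgroup of G such that A ∩ S is not open in S. Then the quotient group G/A has a weak Cartan decomposition: writing B̄ ⊆ G/A for the image of a subset B ⊆ G under the quotient map, one has G/A = 𝒞̄ · Z_{G/A}(S̄) · 𝒞̄, with 𝒞̄ compact and S̄ a non-discrete subgroup of G/A. -/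
/-- **Statement 12.**  Let `G` be a topological group with a weak Cartan decomposition
`G = 𝒞 ⋅ Z_G(S) ⋅ 𝒞` (`𝒞 ⊆ G` a compact subset, `S ⊆ G` a non-discrete subgroup), and let
`A` be a closed central subgroup of `G` such that `A ∩ S` is not open in `S`.  Then the
quotient group `G/A` has a weak Cartan decomposition: writing `B̄ ⊆ G/A` for the image of a
subset `B ⊆ G` under the quotient map, one has `G/A = 𝒞̄ ⋅ Z_{G/A}(S̄) ⋅ 𝒞̄`, with `𝒞̄`
compact and `S̄` a non-discrete subgroup of `G/A`. -/
theorem weakCartan_quotient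
    (G : Type) [Group G] [TopologicalSpace G] [IsTopologicalGroup G]
    (C : Set G) (S : Subgroup G)
    (hCcompact : IsCompact C)
    (hSnondiscrete : ¬ DiscreteTopology ↥S)
    (hCartan : ∀ g : G, ∃ c ∈ C, ∃ z ∈ Subgroup.centralizer (S : Set G), ∃ c' ∈ C,
      g = c * z * c')
    (A : Subgroup G) [A.Normal] (hAcentral : A ≤ Subgroup.center G)
    (hAclosed : IsClosed (A : Set G))
    (hAS : ¬ IsOpen {s : ↥S | (s : G) ∈ A}) :
    IsCompact (QuotientGroup.mk '' C : Set (G ⧸ A)) ∧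
    (¬ DiscreteTopology ↥(Subgroup.map (QuotientGroup.mk' A) S)) ∧
    ∀ q : G ⧸ A, ∃ c ∈ QuotientGroup.mk '' C,
      ∃ z ∈ Subgroup.centralizer ((Subgroup.map (QuotientGroup.mk' A) S : Subgroup (G ⧸ A)) :
        Set (G ⧸ A)), ∃ c' ∈ QuotientGroup.mk '' C, q = c * z * c' := by
  refine ⟨hCcompact.image continuous_quot_mk, ?_, ?_⟩
  · intro hdisc
    apply hAS
    have hcont : Continuous (fun s : ↥S =>
        (⟨QuotientGroup.mk (s : G), ⟨(s : G), s.2, rfl⟩⟩ :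
          ↥(Subgroup.map (QuotientGroup.mk' A) S))) :=
      Continuous.subtype_mk (continuous_quot_mk.comp continuous_subtype_val) _
    have hopen : IsOpen ({1} : Set ↥(Subgroup.map (QuotientGroup.mk' A) S)) :=
      isOpen_discrete _
    have h := hopen.preimage hcont
    convert h using 1
    ext s
    simp [Subtype.ext_iff, QuotientGroup.eq_one_iff]
  · intro q
    obtain ⟨g, rfl⟩ := QuotientGroup.mk_surjective q
    obtain ⟨c, hc, z, hz, c', hc', rfl⟩ := hCartan g
    refine ⟨QuotientGroup.mk c, ⟨c, hc, rfl⟩, QuotientGroup.mk z, ?_,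
      QuotientGroup.mk c', ⟨c', hc', rfl⟩, by simp⟩
    rintro x ⟨s, hs, rfl⟩
    have h := hz s hs
    show QuotientGroup.mk (s : G) * QuotientGroup.mk z = QuotientGroup.mk z * QuotientGroup.mk (s : G)
    rw [← QuotientGroup.mk_mul, ← QuotientGroup.mk_mul, h]
end
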